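/- arXiv:1812.04566 — 8 statements merged into one kernel-verified Lean document; each statement's English description precedes it below -/
import Mathlib

section
/- Let t be a prime number and q an integer greater than 1. If q^t − 1 divides (q − 1)^k for some positive integer k, then t = 2. -/
open Finset

lemma sq_zero_geom_aux {R : Type*} [CommRing R] (x : R) (hx : x * x = 0) :
    ∀ i : ℕ, (1 + x) ^ i = 1 + (i : R) * x := by
  intro i
  induction i with
  | zero => simp
  | succ n ih =>
    rw [pow_succ, ih]
    push_cast
    linear_combination (n : R) * hx

/-- Let `t` be a prime and `q > 1` an integer. If `q ^ t - 1` divides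
`(q - 1) ^ k` for some positive integer `k`, then `t = 2`. -/
theorem prime_eq_two_of_pow_sub_one_dvd
    (t q k : ℕ) (ht : t.Prime) (hq : 1 < q) (hk : 0 < k)
    (hdvd : (q ^ t - 1) ∣ (q - 1) ^ k) : t = 2 := by
  by_contra hne
  have htodd : Odd t := ht.odd_of_ne_two hne
  have ht1 : 1 < t := ht.one_lt
  set s : ℕ := ∑ i ∈ range t, q ^ i with hsdef
  have hfac : s * (q - 1) = q ^ t - 1 := geom_sum_mul_of_one_le hq.le t
  have hsdvd : s ∣ (q - 1) ^ k := (dvd_trans ⟨q - 1, hfac.symm⟩ hdvd)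
  -- every prime dividing s equals t
  have hpt : ∀ {p : ℕ}, p.Prime → p ∣ s → p = t := by
    intro p hp hps
    have hpq : p ∣ q - 1 := hp.dvd_of_dvd_pow (hps.trans hsdvd)
    have hq1 : ((q : ZMod p)) = 1 := by
      have : ((q - 1 : ℕ) : ZMod p) = 0 := (ZMod.natCast_eq_zero_iff _ _).mpr hpq
      rwa [Nat.cast_sub hq.le, Nat.cast_one, sub_eq_zero] at this
    have hs0 : ((s : ℕ) : ZMod p) = 0 := (ZMod.natCast_eq_zero_iff _ _).mpr hps
    have htz : ((t : ℕ) : ZMod p) = 0 := by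
      rw [hsdef] at hs0
      push_cast at hs0
      simpa [hq1] using hs0
    exact ((Nat.prime_dvd_prime_iff_eq hp ht).mp
      ((ZMod.natCast_eq_zero_iff _ _).mp htz))
  have hs_gt : t < s := by
    have : ∑ i ∈ range t, 1 < ∑ i ∈ range t, q ^ i := by
      apply Finset.sum_lt_sum (fun i _ => Nat.one_le_pow _ _ (by omega))
      exact ⟨1, Finset.mem_range.mpr ht1, by simpa using hq⟩
    simpa using this
  have hs0 : s ≠ 0 := by omega
  obtain hpow := Nat.eq_prime_pow_of_unique_prime_dvd hs0 (fun {d} hd hds => hpt hd hds)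
  set a := s.primeFactorsList.length with ha
  have ha2 : 2 ≤ a := by
    by_contra h
    interval_cases a
    · rw [pow_zero] at hpow; omega
    · rw [pow_one] at hpow; omega
  have ht2s : t ^ 2 ∣ s := hpow ▸ pow_dvd_pow t ha2
  -- t ∣ q - 1
  have htq : t ∣ q - 1 := by
    have hts : t ∣ s := hpow ▸ dvd_pow_self t (by omega)
    exact ht.dvd_of_dvd_pow (hts.trans hsdvd)
  obtain ⟨m, hm⟩ := htq
  -- work in ZMod (t^2)
  have htt : ((t : ZMod (t ^ 2))) * (t : ZMod (t ^ 2)) = 0 := by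
    have h0 : (((t ^ 2 : ℕ)) : ZMod (t ^ 2)) = 0 := ZMod.natCast_self _
    push_cast at h0
    linear_combination h0
  have hqR : (q : ZMod (t ^ 2)) = 1 + t * m := by
    have hq' : (q : ℕ) = 1 + t * m := by omega
    rw [hq']; push_cast; ring
  have hz : ((t : ZMod (t ^ 2)) * m) * ((t : ZMod (t ^ 2)) * m) = 0 := by
    linear_combination (m : ZMod (t ^ 2)) * m * htt
  have hpow' : ∀ i : ℕ, (q : ZMod (t ^ 2)) ^ i = 1 + i * (t * m) := by
    intro i
    rw [hqR]
    exact sq_zero_geom_aux _ hz i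
  -- t divides the Gauss sum
  have hgauss : t ∣ ∑ i ∈ range t, i := by
    have h2 : (∑ i ∈ range t, i) * 2 = t * (t - 1) := Finset.sum_range_id_mul_two t
    have : t ∣ (∑ i ∈ range t, i) * 2 := h2 ▸ Dvd.intro _ rfl
    exact (Nat.Coprime.dvd_of_dvd_mul_right
      (htodd.coprime_two_right) this)
  obtain ⟨c, hc⟩ := hgauss
  have hsR : ((s : ℕ) : ZMod (t ^ 2)) = (t : ZMod (t ^ 2)) := by
    rw [hsdef]
    push_cast
    rw [Finset.sum_congr rfl (fun i _ => hpow' i)]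
    rw [Finset.sum_add_distrib, ← Finset.sum_mul]
    have : (∑ i ∈ range t, (i : ZMod (t ^ 2))) = (t : ZMod (t ^ 2)) * c := by
      rw [← Nat.cast_sum]
      rw [hc]; push_cast; ring
    rw [this]
    simp
    linear_combination (c : ZMod (t ^ 2)) * (m : ZMod (t ^ 2)) * htt
  have hs0R : ((s : ℕ) : ZMod (t ^ 2)) = 0 :=
    (ZMod.natCast_eq_zero_iff _ _).mpr ht2s
  have htz : ((t : ℕ) : ZMod (t ^ 2)) = 0 := by rw [← hsR, hs0R]
  have : t ^ 2 ∣ t := (ZMod.natCast_eq_zero_iff _ _).mp htz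
  have := Nat.le_of_dvd (by omega) this
  nlinarith
end

section
/- If N is a non-trivial proper normal subgroup of a finite group G, then diam(G) ≤ 4 · diam(N) · diam(G/N). -/
/-- For a group `G`, `diamLe G L` says that for every generating set `S` of `G`, every
element of `G` is a product of at most `L` elements of `S ∪ S⁻¹`. -/
def diamLe (G : Type*) [Group G] (L : ℕ) : Prop :=
  ∀ S : Set G, Subgroup.closure S = ⊤ →
    ∀ g : G, ∃ l : List G,
      (∀ x ∈ l, x ∈ S ∨ x⁻¹ ∈ S) ∧ l.length ≤ L ∧ l.prod = g

/-- The diameter `diam G` of a group `G`: the maximum over all generating sets `S` of the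
least `L` such that every element of `G` is a product of at most `L` elements of
`S ∪ S⁻¹`, i.e. the least `L` such that `diamLe G L` holds. -/
noncomputable def diam (G : Type*) [Group G] : ℕ :=
  sInf {L | diamLe G L}

open Subgroup







/-- `g` is a product of at most `L` elements of `S ∪ S⁻¹`. -/
def IsWord {G : Type*} [Group G] (S : Set G) (L : ℕ) (g : G) : Prop :=
  ∃ l : List G, (∀ x ∈ l, x ∈ S ∨ x⁻¹ ∈ S) ∧ l.length ≤ L ∧ l.prod = g

namespace IsWord

variable {G : Type*} [Group G] {S : Set G}

lemma one (L : ℕ) : IsWord S L (1 : G) := ⟨[], by simp, by simp, by simp⟩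

lemma mono {L L' : ℕ} {g : G} (h : IsWord S L g) (hLL : L ≤ L') : IsWord S L' g := by
  obtain ⟨l, h1, h2, h3⟩ := h
  exact ⟨l, h1, h2.trans hLL, h3⟩

lemma mul {a b : ℕ} {g h : G} (hg : IsWord S a g) (hh : IsWord S b h) :
    IsWord S (a + b) (g * h) := by
  obtain ⟨l, h1, h2, h3⟩ := hg
  obtain ⟨m, k1, k2, k3⟩ := hh
  refine ⟨l ++ m, ?_, ?_, by simp [h3, k3]⟩
  · intro x hx
    rcases List.mem_append.mp hx with hx | hx
    · exact h1 x hx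
    · exact k1 x hx
  · simpa using Nat.add_le_add h2 k2

lemma inv {L : ℕ} {g : G} (hg : IsWord S L g) : IsWord S L g⁻¹ := by
  obtain ⟨l, h1, h2, h3⟩ := hg
  refine ⟨(l.map (·⁻¹)).reverse, ?_, by simpa using h2, ?_⟩
  · intro x hx
    simp only [List.mem_reverse, List.mem_map] at hx
    obtain ⟨y, hy, rfl⟩ := hx
    rcases h1 y hy with h | h
    · exact Or.inr (by simpa using h)
    · exact Or.inl h
  · rw [← h3, ← List.prod_inv_reverse]

lemma single {g : G} (hg : g ∈ S ∨ g⁻¹ ∈ S) : IsWord S 1 g :=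
  ⟨[g], by simpa using hg, by simp, by simp⟩

lemma list_prod {c : ℕ} {l : List G} (h : ∀ x ∈ l, IsWord S c x) :
    IsWord S (l.length * c) l.prod := by
  induction l with
  | nil => simpa using one 0
  | cons x l ih =>
    have := (h x (by simp)).mul (ih fun y hy => h y (List.mem_cons_of_mem _ hy))
    simpa [Nat.succ_mul, Nat.add_comm] using this

end IsWord

lemma diamLe_exists (H : Type*) [Group H] [Finite H] : ∃ L, diamLe H L := by
  classical
  have key : ∀ (S : Set H) (g : H), ∃ n, Subgroup.closure S = ⊤ → IsWord S n g := by
    intro S g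
    by_cases hS : Subgroup.closure S = ⊤
    · have hg : g ∈ (Subgroup.closure S).toSubmonoid := by rw [hS]; trivial
      rw [Subgroup.closure_toSubmonoid] at hg
      obtain ⟨l, hl, hp⟩ := Submonoid.exists_list_of_mem_closure hg
      refine ⟨l.length, fun _ => ⟨l, ?_, le_refl _, hp⟩⟩
      intro x hx
      rcases hl x hx with h | h
      · exact Or.inl h
      · exact Or.inr h
    · exact ⟨0, fun h => absurd h hS⟩
  choose F hF using key
  obtain ⟨L, hL⟩ := Set.Finite.bddAbove (Set.finite_range (Function.uncurry F))
  refine ⟨L, fun S hS g => ?_⟩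
  have := (hF S g hS).mono (hL ⟨(S, g), rfl⟩)
  exact this

lemma diamLe_diam (H : Type*) [Group H] [Finite H] : diamLe H (diam H) :=
  Nat.sInf_mem (diamLe_exists H)

lemma one_le_diam (H : Type*) [Group H] [Finite H] [Nontrivial H] : 1 ≤ diam H := by
  rcases Nat.eq_zero_or_pos (diam H) with h | h
  · exfalso
    have hd := diamLe_diam H
    rw [h] at hd
    obtain ⟨g, hg⟩ := exists_ne (1 : H)
    obtain ⟨l, -, hlen, hprod⟩ := hd Set.univ Subgroup.closure_univ g
    rw [Nat.le_zero, List.length_eq_zero_iff] at hlen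
    subst hlen
    simp at hprod; exact hg hprod.symm
  · exact h

lemma lift_word {G H : Type*} [Group G] [Group H] (π : G →* H) (S : Set G) :
    ∀ l : List H, (∀ x ∈ l, x ∈ π '' S ∨ x⁻¹ ∈ π '' S) →
    ∃ m : List G, (∀ x ∈ m, x ∈ S ∨ x⁻¹ ∈ S) ∧ m.length = l.length ∧ π m.prod = l.prod := by
  intro l
  induction l with
  | nil => exact fun _ => ⟨[], by simp, by simp, by simp⟩
  | cons x l ih =>
    intro hl
    obtain ⟨m, hm, hlen, hprod⟩ := ih fun y hy => hl y (List.mem_cons_of_mem _ hy)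
    rcases hl x List.mem_cons_self with ⟨s, hs, hsx⟩ | ⟨s, hs, hsx⟩
    · refine ⟨s :: m, fun y hy => ?_, by simp [hlen], by simp [hprod, hsx]⟩
      rcases List.mem_cons.mp hy with rfl | hy
      exacts [Or.inl hs, hm y hy]
    · refine ⟨s⁻¹ :: m, fun y hy => ?_, by simp [hlen], ?_⟩
      · rcases List.mem_cons.mp hy with rfl | hy
        exacts [Or.inr (by simpa using hs), hm y hy]
      · simp only [List.prod_cons, map_mul, map_inv, hsx, inv_inv, hprod]

/-- **Babai–Seress.** If `N` is a non-trivial proper normal subgroup of a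
finite group `G`, then `diam G ≤ 4 * diam N * diam (G / N)`. -/
theorem diam_le_of_normal
    (G : Type*) [Group G] [Finite G]
    (N : Subgroup G) [N.Normal] (hbot : N ≠ ⊥) (htop : N ≠ ⊤) :
    diam G ≤ 4 * diam N * diam (G ⧸ N) := by
  classical
  set L1 := diam N with hL1def
  set L2 := diam (G ⧸ N) with hL2def
  have hL1 := diamLe_diam N
  have hL2 := diamLe_diam (G ⧸ N)
  have hN1 : Nontrivial N := (Subgroup.nontrivial_iff_ne_bot N).mpr hbot
  have hQ1 : Nontrivial (G ⧸ N) := by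
    obtain ⟨g, hg⟩ : ∃ g : G, g ∉ N := by
      by_contra h
      push_neg at h
      exact htop ((Subgroup.eq_top_iff' N).mpr h)
    exact ⟨(g : G ⧸ N), 1, fun h => hg ((QuotientGroup.eq_one_iff g).mp h)⟩
  have h1 : 1 ≤ L1 := one_le_diam N
  have h2 : 1 ≤ L2 := one_le_diam (G ⧸ N)
  have key : diamLe G (L1 * (2 * L2 + 1) + L2) := by
    intro S hS g
    set π := QuotientGroup.mk' N with hπ
    have hmemN : ∀ y : G, π y = 1 ↔ y ∈ N := fun y => QuotientGroup.eq_one_iff y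
    have hπsurj : Function.Surjective π := QuotientGroup.mk'_surjective N
    have hS' : Subgroup.closure (π '' S) = ⊤ := by
      rw [← MonoidHom.map_closure, hS, Subgroup.map_top_of_surjective _ hπsurj]
    have hrepex : ∀ q : G ⧸ N, ∃ r : G, IsWord S L2 r ∧ π r = q ∧ (q = 1 → r = 1) := by
      intro q
      by_cases hq : q = 1
      · exact ⟨1, IsWord.one _, by simp [hq], fun _ => rfl⟩
      · obtain ⟨l, hl, hlen, hprod⟩ := hL2 (π '' S) hS' q
        obtain ⟨m, hm, hmlen, hmprod⟩ := lift_word π S l hl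
        exact ⟨m.prod, ⟨m, hm, le_trans (le_of_eq hmlen) hlen, rfl⟩,
          by rw [hmprod, hprod], fun h => absurd h hq⟩
    choose rep hrepw hrepπ hrep1 using hrepex
    set T : Set G := {x : G | x ∈ N ∧ IsWord S (2 * L2 + 1) x} with hT
    have hTN : Subgroup.closure T ≤ N := (Subgroup.closure_le N).mpr fun x hx => hx.1
    have claimA : ∀ l : List G, (∀ x ∈ l, x ∈ S ∨ x⁻¹ ∈ S) →
        l.prod * (rep (π l.prod))⁻¹ ∈ Subgroup.closure T := by
      intro l
      induction l using List.reverseRecOn with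
      | nil =>
        intro _
        simp only [List.prod_nil, map_one]
        rw [hrep1 1 rfl]
        simpa using Subgroup.one_mem _
      | append_singleton l x ih =>
        intro hl
        have ihl := ih fun y hy => hl y (by simp [hy])
        have hx : x ∈ S ∨ x⁻¹ ∈ S := hl x (by simp)
        have hb : rep (π l.prod) * x * (rep (π l.prod * π x))⁻¹ ∈ T := by
          constructor
          · rw [← hmemN]
            simp only [map_mul, map_inv, hrepπ]
            group
          · have hw := ((hrepw (π l.prod)).mul (IsWord.single hx)).mul
              (IsWord.inv (hrepw (π l.prod * π x)))
            exact hw.mono (by omega)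
        have hab := Subgroup.mul_mem _ ihl (Subgroup.subset_closure hb)
        have heq : (l.prod * (rep (π l.prod))⁻¹) *
            (rep (π l.prod) * x * (rep (π l.prod * π x))⁻¹) =
            (l ++ [x]).prod * (rep (π ((l ++ [x]).prod)))⁻¹ := by
          rw [List.prod_append, List.prod_singleton, map_mul]
          group
        rwa [heq] at hab
    have hNle : ∀ n : G, n ∈ N → n ∈ Subgroup.closure T := by
      intro n hn
      have hn' : n ∈ (Subgroup.closure S).toSubmonoid := by rw [hS]; trivial
      rw [Subgroup.closure_toSubmonoid] at hn'
      obtain ⟨l, hl, hp⟩ := Submonoid.exists_list_of_mem_closure hn'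
      have hl' : ∀ x ∈ l, x ∈ S ∨ x⁻¹ ∈ S := by
        intro x hx
        rcases hl x hx with h | h
        · exact Or.inl h
        · exact Or.inr h
      have hA := claimA l hl'
      rw [hp] at hA
      have hπn : π n = 1 := (hmemN n).mpr hn
      rwa [hπn, hrep1 1 rfl, inv_one, mul_one] at hA
    set T' : Set N := {n : N | IsWord S (2 * L2 + 1) (n : G)} with hT'
    have hT'top : Subgroup.closure T' = ⊤ := by
      rw [eq_top_iff]
      rintro ⟨n, hn⟩ -
      refine Subgroup.closure_induction
        (p := fun g hg => ∀ h : g ∈ N, (⟨g, h⟩ : N) ∈ Subgroup.closure T')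
        ?_ ?_ ?_ ?_ (hNle n hn) hn
      · intro x hx h
        exact Subgroup.subset_closure hx.2
      · intro h
        exact Subgroup.one_mem _
      · intro x y hx hy px py h
        exact Subgroup.mul_mem _ (px (hTN hx)) (py (hTN hy))
      · intro x hx px h
        exact Subgroup.inv_mem _ (px (hTN hx))
    have hNword : ∀ n : G, n ∈ N → IsWord S (L1 * (2 * L2 + 1)) n := by
      intro n hn
      obtain ⟨ln, hln, hlen, hprod⟩ := hL1 T' hT'top ⟨n, hn⟩
      have hword : ∀ x ∈ ln.map (N.subtype), IsWord S (2 * L2 + 1) x := by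
        intro x hx
        simp only [List.mem_map] at hx
        obtain ⟨y, hy, rfl⟩ := hx
        rcases hln y hy with h | h
        · exact h
        · have h' : IsWord S (2 * L2 + 1) ((y⁻¹ : N) : G) := h
          have := h'.inv
          simpa using this
      have hprodw := IsWord.list_prod hword
      have hmapprod : (ln.map (N.subtype)).prod = n := by
        rw [← map_list_prod N.subtype ln, hprod]
        rfl
      rw [hmapprod] at hprodw
      refine hprodw.mono ?_
      have : (ln.map (N.subtype)).length = ln.length := List.length_map _
      rw [this]
      exact Nat.mul_le_mul_right _ hlen
    have hg1 : g * (rep (π g))⁻¹ ∈ N := by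
      rw [← hmemN]
      simp only [map_mul, map_inv, hrepπ]
      group
    have hfinal := (hNword _ hg1).mul (hrepw (π g))
    rw [inv_mul_cancel_right] at hfinal
    exact hfinal
  have hmem : diamLe G (4 * L1 * L2) := by
    intro S hS g
    obtain ⟨l, a, b, c⟩ := key S hS g
    refine ⟨l, a, b.trans ?_, c⟩
    nlinarith [h1, h2]
  exact Nat.sInf_le hmem
end

section
/- There exists an absolute constant c > 0 such that for every prime p, every power q of p, every integer n ≥ 1, and every p-subgroup P of GL(n, F_q), one has diam(P) ≤ q^(c·n). -/
open Subgroup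
open scoped commutatorElement

section Reach

variable {G : Type*} [Group G]

/-- Word-length reachability: `g` is a product of at most `r` elements of `S ∪ S⁻¹`. -/
def Reach (S : Set G) (r : ℕ) (g : G) : Prop :=
  ∃ l : List G, (∀ x ∈ l, x ∈ S ∨ x⁻¹ ∈ S) ∧ l.length ≤ r ∧ l.prod = g

lemma Reach.mono {S : Set G} {r r' : ℕ} (h : r ≤ r') {g : G} (hg : Reach S r g) :
    Reach S r' g := by
  obtain ⟨l, h1, h2, h3⟩ := hg
  exact ⟨l, h1, h2.trans h, h3⟩

lemma reach_one (S : Set G) (r : ℕ) : Reach S r 1 :=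
  ⟨[], by simp, by simp, rfl⟩

lemma Reach.mul {S : Set G} {r r' : ℕ} {g h : G} (hg : Reach S r g) (hh : Reach S r' h) :
    Reach S (r + r') (g * h) := by
  obtain ⟨l, h1, h2, h3⟩ := hg
  obtain ⟨l', h1', h2', h3'⟩ := hh
  refine ⟨l ++ l', ?_, ?_, by simp [h3, h3']⟩
  · intro x hx
    rcases List.mem_append.1 hx with hx | hx
    · exact h1 x hx
    · exact h1' x hx
  · simpa using Nat.add_le_add h2 h2'

lemma Reach.inv {S : Set G} {r : ℕ} {g : G} (hg : Reach S r g) : Reach S r g⁻¹ := by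
  obtain ⟨l, h1, h2, h3⟩ := hg
  refine ⟨(l.map fun x => x⁻¹).reverse, ?_, ?_, ?_⟩
  · intro x hx
    simp only [List.mem_reverse, List.mem_map] at hx
    obtain ⟨y, hy, rfl⟩ := hx
    rcases h1 y hy with h | h
    · right; simpa using h
    · left; exact h
  · simpa using h2
  · rw [← h3, List.prod_inv_reverse]

lemma Reach.pow {S : Set G} {r : ℕ} {g : G} (hg : Reach S r g) (m : ℕ) :
    Reach S (m * r) (g ^ m) := by
  induction m with
  | zero => simpa using reach_one S 0
  | succ m ih =>
      have := ih.mul hg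
      rw [← pow_succ g m] at this
      simpa [Nat.succ_mul] using this

lemma reach_of_mem {S : Set G} {x : G} (h : x ∈ S ∨ x⁻¹ ∈ S) : Reach S 1 x :=
  ⟨[x], by simpa using h, by simp, by simp⟩

/-- Elements of the closure are products of letters. -/
lemma exists_word {S : Set G} {g : G} (hg : g ∈ closure S) :
    ∃ l : List G, (∀ x ∈ l, x ∈ S ∨ x⁻¹ ∈ S) ∧ l.prod = g := by
  have hg' : g ∈ (closure S).toSubmonoid := hg
  rw [Subgroup.closure_toSubmonoid] at hg'
  obtain ⟨l, hl, hp⟩ := Submonoid.exists_list_of_mem_closure hg'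
  refine ⟨l, ?_, hp⟩
  intro x hx
  rcases hl x hx with h | h
  · exact Or.inl h
  · exact Or.inr (by simpa using h)

end Reach

section Greedy

variable {G : Type*} [Group G] [Finite G]

lemma greedy_aux (T : Set G) :
    ∀ (k : ℕ) (B : Subgroup G), Nat.card G ≤ 2 ^ k * Nat.card B →
      ∃ ts : List G, (∀ t ∈ ts, t ∈ T) ∧ ts.length ≤ k ∧
        closure T ≤ closure {x | x ∈ ts} ⊔ B := by
  intro k
  induction k with
  | zero =>
      intro B hB
      have hBtop : B = ⊤ := by
        apply Subgroup.eq_top_of_card_eq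
        have h1 : Nat.card ↥B ≤ Nat.card G := Nat.card_le_card_of_injective _ Subtype.val_injective
        omega
      exact ⟨[], by simp, by simp, by simp [hBtop]⟩
  | succ k ih =>
      intro B hB
      by_cases hTB : T ⊆ ↑B
      · refine ⟨[], by simp, by simp, ?_⟩
        calc closure T ≤ B := (Subgroup.closure_le B).2 hTB
          _ ≤ _ := le_sup_right
      · obtain ⟨t, htT, htB⟩ := Set.not_subset.1 hTB
        set B' : Subgroup G := closure {t} ⊔ B with hB'def
        have hBB' : B ≤ B' := le_sup_right
        have htB' : t ∈ B' := le_sup_left (a := closure {t}) (Subgroup.mem_closure_singleton.2 ⟨1, zpow_one t⟩)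
        have hcard : 2 * Nat.card ↥B ≤ Nat.card ↥B' := by
          obtain ⟨c, hc⟩ := Subgroup.card_dvd_of_le hBB'
          have hc2 : 2 ≤ c := by
            rcases Nat.lt_or_ge c 2 with h | h
            · interval_cases c
              · simp at hc
                have := Nat.card_pos (α := ↥B')
                omega
              · rw [mul_one] at hc
                exfalso
                apply htB
                have : B' = B := by
                  have hsub : (B : Set G) ⊆ (B' : Set G) := hBB'
                  have hfin : (B' : Set G).Finite := Set.toFinite _
                  have hcard' : (B' : Set G).ncard ≤ (B : Set G).ncard := by
                    rw [← Nat.card_coe_set_eq, ← Nat.card_coe_set_eq]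
                    have h1 : Nat.card ↥B' = Nat.card ↥B := hc
                    simp only [SetLike.coe_sort_coe]
                    omega
                  have := Set.eq_of_subset_of_ncard_le hsub hcard' hfin
                  exact (SetLike.coe_injective this.symm)
                rw [← this]; exact htB'
            · exact h
          calc 2 * Nat.card ↥B ≤ c * Nat.card ↥B := Nat.mul_le_mul_right _ hc2
            _ = Nat.card ↥B' := by rw [hc, mul_comm]
        obtain ⟨ts, hts1, hts2, hts3⟩ := ih B' (by
          calc Nat.card G ≤ 2 ^ (k+1) * Nat.card ↥B := hB
            _ = 2 ^ k * (2 * Nat.card ↥B) := by ring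
            _ ≤ 2 ^ k * Nat.card ↥B' := Nat.mul_le_mul_left _ hcard)
        refine ⟨t :: ts, ?_, by simpa using hts2, ?_⟩
        · intro x hx
          rcases List.mem_cons.1 hx with rfl | hx
          · exact htT
          · exact hts1 x hx
        · have hset : {x | x ∈ t :: ts} = insert t {x | x ∈ ts} := by
            ext x; simp [List.mem_cons]
          have h1 : closure {x | x ∈ ts} ≤ closure {x | x ∈ t :: ts} :=
            closure_mono (by rw [hset]; exact Set.subset_insert _ _)
          have h2 : closure {t} ≤ closure {x | x ∈ t :: ts} :=
            closure_mono (by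
              rw [hset]; intro x hx
              simp only [Set.mem_singleton_iff] at hx
              subst hx; exact Set.mem_insert _ _)
          calc closure T ≤ closure {x | x ∈ ts} ⊔ B' := hts3
            _ ≤ closure {x | x ∈ t :: ts} ⊔ B := by
                rw [hB'def]
                exact sup_le (h1.trans le_sup_left)
                  (sup_le (h2.trans le_sup_left) le_sup_right)
  
end Greedy

section CommHelpers
variable {A : Type*} [Group A]

lemma commute_of_mem_closure {s : Set A} {a x : A} (h : ∀ y ∈ s, Commute a y)
    (hx : x ∈ closure s) : Commute a x := by
  induction hx using Subgroup.closure_induction with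
  | mem y hy => exact h y hy
  | one => exact Commute.one_right a
  | mul x y hx hy ihx ihy => exact ihx.mul_right ihy
  | inv x hx ih => exact ih.inv_right

lemma mem_sup_of_commute {H K : Subgroup A} (hc : ∀ h ∈ H, ∀ k ∈ K, Commute h k) {x : A}
    (hx : x ∈ H ⊔ K) : ∃ h ∈ H, ∃ k ∈ K, h * k = x := by
  rw [Subgroup.sup_eq_closure] at hx
  induction hx using Subgroup.closure_induction with
  | mem y hy =>
      rcases hy with hy | hy
      · exact ⟨y, hy, 1, one_mem K, mul_one y⟩
      · exact ⟨1, one_mem H, y, hy, one_mul y⟩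
  | one => exact ⟨1, one_mem H, 1, one_mem K, one_mul 1⟩
  | mul x y hx hy ihx ihy =>
      obtain ⟨h, hh, k, hk, rfl⟩ := ihx
      obtain ⟨h', hh', k', hk', rfl⟩ := ihy
      refine ⟨h * h', mul_mem hh hh', k * k', mul_mem hk hk', ?_⟩
      have hcom : k * h' = h' * k := (hc h' hh' k hk).symm
      calc h * h' * (k * k') = h * (h' * k) * k' := by group
        _ = h * (k * h') * k' := by rw [hcom]
        _ = h * k * (h' * k') := by group
  | inv x hx ih =>
      obtain ⟨h, hh, k, hk, rfl⟩ := ih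
      refine ⟨h⁻¹, inv_mem hh, k⁻¹, inv_mem hk, ?_⟩
      have hcm : Commute h⁻¹ k⁻¹ := (hc h hh k hk).inv_inv
      rw [mul_inv_rev]
      exact hcm.eq

end CommHelpers

section Step
variable {G : Type*} [Group G]

/-- Core claim: abelian normal form modulo `N` from a commuting-mod-`N` generating list. -/
lemma step_claim (S : Set G) (H N : Subgroup G) [hN : N.Normal] (hNH : N ≤ H)
    (E ℓ : ℕ) (hE1 : 1 ≤ E) (hE : ∀ g : G, g ^ E = 1)
    (habel : ∀ x y : G, x ∈ H → y ∈ H → ⁅x, y⁆ ∈ N) :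
    ∀ ts : List G, (∀ t ∈ ts, t ∈ H ∧ Reach S ℓ t) → ∀ h : G, h ∈ H →
      ((h : G ⧸ N) ∈ closure ((QuotientGroup.mk : G → G ⧸ N) '' {x | x ∈ ts})) →
      ∃ w, Reach S (ts.length * (E * ℓ)) w ∧ w ∈ H ∧ w⁻¹ * h ∈ N := by
  have comm_gen : ∀ x y : G, x ∈ H → y ∈ H →
      Commute ((x : G ⧸ N)) ((y : G ⧸ N)) := by
    intro x y hx hy
    have key : ((x * y : G) : G ⧸ N) = ((y * x : G) : G ⧸ N) := by
      rw [QuotientGroup.eq]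
      have h2 : (x * y)⁻¹ * (y * x) = ⁅y⁻¹, x⁻¹⁆ := by
        rw [commutatorElement_def]; group
      rw [h2]
      exact habel _ _ (inv_mem hy) (inv_mem hx)
    show ((x : G ⧸ N)) * ((y : G ⧸ N)) = ((y : G ⧸ N)) * ((x : G ⧸ N))
    rw [← QuotientGroup.mk_mul, ← QuotientGroup.mk_mul, key]
  intro ts
  induction ts with
  | nil =>
      intro _ h hH hq
      have hempty : {x : G | x ∈ ([] : List G)} = ∅ := by ext x; simp
      rw [hempty, Set.image_empty, Subgroup.closure_empty, Subgroup.mem_bot] at hq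
      refine ⟨1, by simpa using reach_one S 0, one_mem H, ?_⟩
      rw [inv_one, one_mul]
      exact (QuotientGroup.eq_one_iff h).1 hq
  | cons t ts ih =>
      intro hts h hH hq
      have htH : t ∈ H := (hts t List.mem_cons_self).1
      have htR : Reach S ℓ t := (hts t List.mem_cons_self).2
      have hset : {x : G | x ∈ t :: ts} = insert t {x | x ∈ ts} := by
        ext x; simp [List.mem_cons]
      rw [hset, Set.image_insert_eq, Set.insert_eq, Subgroup.closure_union] at hq
      have cb : ∀ b ∈ closure ((QuotientGroup.mk : G → G ⧸ N) '' {x | x ∈ ts}),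
          Commute ((t : G ⧸ N)) b := by
        intro b hb
        refine commute_of_mem_closure ?_ hb
        rintro y ⟨t', ht', rfl⟩
        exact comm_gen t t' htH (hts t' (List.mem_cons_of_mem t ht')).1
      have hc : ∀ a ∈ closure {((t : G ⧸ N))}, ∀ b ∈
          closure ((QuotientGroup.mk : G → G ⧸ N) '' {x | x ∈ ts}), Commute a b := by
        intro a ha b hb
        refine (commute_of_mem_closure ?_ ha).symm
        intro y hy
        rcases Set.mem_singleton_iff.1 hy with rfl
        exact (cb b hb).symm
      obtain ⟨a, ha, b, hb, hab⟩ := mem_sup_of_commute hc hq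
      obtain ⟨m, hm⟩ := Subgroup.mem_closure_singleton.1 ha
      have hEZ : ((E : ℤ)) ≠ 0 := by
        have : E ≠ 0 := by omega
        exact_mod_cast this
      have hEpos : (0 : ℤ) < (E : ℤ) := by exact_mod_cast hE1
      set m' : ℕ := (m % (E : ℤ)).toNat with hm'def
      have hm'lt : m' < E := by
        have h1 : m % (E : ℤ) < E := Int.emod_lt_of_pos m hEpos
        have h2 : 0 ≤ m % (E : ℤ) := Int.emod_nonneg m hEZ
        omega
      have htE : ((t : G ⧸ N)) ^ (E : ℤ) = 1 := by
        rw [zpow_natCast, ← QuotientGroup.mk_pow, hE t]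
        rfl
      have hzpow : ((t : G ⧸ N)) ^ m = ((t : G ⧸ N)) ^ m' := by
        conv_lhs => rw [← Int.mul_ediv_add_emod m (E : ℤ)]
        rw [zpow_add, zpow_mul, htE, one_zpow, one_mul,
          ← Int.toNat_of_nonneg (Int.emod_nonneg m hEZ), zpow_natCast]
      have hmk : ((t ^ m' : G) : G ⧸ N) = a := by
        rw [QuotientGroup.mk_pow, ← hzpow, hm]
      have hb' : (((t ^ m')⁻¹ * h : G) : G ⧸ N) ∈
          closure ((QuotientGroup.mk : G → G ⧸ N) '' {x | x ∈ ts}) := by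
        have hbeq : (((t ^ m')⁻¹ * h : G) : G ⧸ N) = b := by
          rw [QuotientGroup.mk_mul, QuotientGroup.mk_inv, hmk, ← hab]
          group
        rw [hbeq]; exact hb
      obtain ⟨w', hw'R, hw'H, hw'N⟩ := ih (fun t' ht' => hts t' (List.mem_cons_of_mem t ht'))
        ((t ^ m')⁻¹ * h) (mul_mem (inv_mem (pow_mem htH m')) hH) hb'
      refine ⟨t ^ m' * w', ?_, mul_mem (pow_mem htH m') hw'H, ?_⟩
      · have h1 : Reach S (m' * ℓ) (t ^ m') := htR.pow m'
        have h2 := h1.mul hw'R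
        refine h2.mono ?_
        have h3 : m' * ℓ ≤ E * ℓ := Nat.mul_le_mul_right ℓ (le_of_lt hm'lt)
        have h4 : (t :: ts).length = ts.length + 1 := rfl
        rw [h4, Nat.succ_mul]
        omega
      · have heq : (t ^ m' * w')⁻¹ * h = w'⁻¹ * ((t ^ m')⁻¹ * h) := by group
        rw [heq]
        exact hw'N

/-- Step (a): short coset representatives modulo `N`. -/
lemma step_rep [Finite G] (S : Set G) (H N : Subgroup G) [hN : N.Normal] (hNH : N ≤ H)
    (E ℓ k : ℕ) (hE1 : 1 ≤ E) (hE : ∀ g : G, g ^ E = 1)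
    (habel : ∀ x y : G, x ∈ H → y ∈ H → ⁅x, y⁆ ∈ N)
    (hk : Nat.card G ≤ 2 ^ k)
    (hgen : ∀ h ∈ H, h ∈ closure {x | x ∈ H ∧ Reach S ℓ x}) :
    ∀ h ∈ H, ∃ w, Reach S (k * (E * ℓ)) w ∧ w ∈ H ∧ w⁻¹ * h ∈ N := by
  obtain ⟨ts, hts1, hts2, hts3⟩ := greedy_aux {x | x ∈ H ∧ Reach S ℓ x} k ⊥
    (by simpa using hk)
  rw [sup_bot_eq] at hts3
  intro h hH
  have hcl : h ∈ closure {x : G | x ∈ ts} := hts3 (hgen h hH)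
  have hq : ((h : G ⧸ N)) ∈ closure ((QuotientGroup.mk : G → G ⧸ N) '' {x | x ∈ ts}) := by
    have h2 : (QuotientGroup.mk' N) h ∈
        Subgroup.map (QuotientGroup.mk' N) (closure {x : G | x ∈ ts}) := ⟨h, hcl, rfl⟩
    rw [MonoidHom.map_closure] at h2
    simpa using h2
  obtain ⟨w, hwR, hwH, hwN⟩ := step_claim S H N hNH E ℓ hE1 hE habel ts
    (fun t ht => hts1 t ht) h hH hq
  exact ⟨w, hwR.mono (Nat.mul_le_mul_right _ hts2), hwH, hwN⟩

/-- Step (b): Schreier-type generation of `N` by short elements. -/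
lemma step_schreier (S : Set G) (H N : Subgroup G) [hN : N.Normal] (hNH : N ≤ H)
    (r ℓ : ℕ)
    (hrep : ∀ h ∈ H, ∃ w, Reach S r w ∧ w ∈ H ∧ w⁻¹ * h ∈ N)
    (hgen : ∀ h ∈ H, h ∈ closure {x | x ∈ H ∧ Reach S ℓ x}) :
    ∀ x ∈ N, x ∈ closure {y | y ∈ N ∧ Reach S (r + ℓ + r) y} := by
  set C := closure {y : G | y ∈ N ∧ Reach S (r + ℓ + r) y} with hC
  have claim : ∀ lw : List G, (∀ x ∈ lw, x ∈ H ∧ Reach S ℓ x) →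
      ∀ u, u ∈ H → Reach S r u → u * lw.prod ∈ N → u * lw.prod ∈ C := by
    intro lw
    induction lw with
    | nil =>
        intro _ u hu huR huN
        rw [List.prod_nil, mul_one] at huN ⊢
        exact subset_closure ⟨huN, huR.mono (by omega)⟩
    | cons s lw ih =>
        intro hlw u hu huR hprod
        have hsH : s ∈ H := (hlw s List.mem_cons_self).1
        have hsR : Reach S ℓ s := (hlw s List.mem_cons_self).2
        obtain ⟨w, hwR, hwH, hwN⟩ := hrep (u * s) (mul_mem hu hsH)
        have hf1N : u * s * w⁻¹ ∈ N := by
          have : u * s * w⁻¹ = w * (w⁻¹ * (u * s)) * w⁻¹ := by group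
          rw [this]
          exact hN.conj_mem _ hwN w
        have hf1R : Reach S (r + ℓ + r) (u * s * w⁻¹) := (huR.mul hsR).mul hwR.inv
        have hf1C : u * s * w⁻¹ ∈ C := subset_closure ⟨hf1N, hf1R⟩
        have hprod' : u * s * lw.prod ∈ N := by
          rw [List.prod_cons] at hprod
          have : u * (s * lw.prod) = u * s * lw.prod := by group
          rwa [this] at hprod
        have hf2N : w * lw.prod ∈ N := by
          have : w * lw.prod = (u * s * w⁻¹)⁻¹ * (u * s * lw.prod) := by group
          rw [this]
          exact mul_mem (inv_mem hf1N) hprod'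
        have hf2C : w * lw.prod ∈ C :=
          ih (fun x hx => hlw x (List.mem_cons_of_mem s hx)) w hwH hwR hf2N
        have : u * (s :: lw).prod = (u * s * w⁻¹) * (w * lw.prod) := by
          rw [List.prod_cons]; group
        rw [this]
        exact mul_mem hf1C hf2C
  intro x hx
  obtain ⟨l, hl, hlp⟩ := exists_word (hgen x (hNH hx))
  have hl' : ∀ y ∈ l, y ∈ H ∧ Reach S ℓ y := by
    intro y hy
    rcases hl y hy with h | h
    · exact h
    · refine ⟨(inv_mem_iff).1 h.1, ?_⟩
      have := h.2.inv
      simpa using this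
  have hcl := claim l hl' 1 (one_mem H) (reach_one S r) (by rwa [one_mul, hlp])
  rwa [one_mul, hlp] at hcl

end Step

section Main
variable {G : Type*} [Group G]

/-- The main combinatorial bound: a finite group of exponent dividing `E`,
cardinality at most `2^k` and derived length at most `d` has diameter at most
`d * (k * (E * (2*k*E+1)^d))`. -/
theorem reach_all_of_derived [Finite G] (E k d : ℕ) (hE1 : 1 ≤ E)
    (hE : ∀ g : G, g ^ E = 1) (hk : Nat.card G ≤ 2 ^ k)
    (hd : derivedSeries G d = ⊥) (S : Set G) (hS : closure S = ⊤) :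
    ∀ g : G, Reach S (d * (k * (E * (2 * k * E + 1) ^ d))) g := by
  set c0 : ℕ := 2 * k * E + 1 with hc0
  have hc0pos : 1 ≤ c0 := by omega
  -- the generation invariant
  have GEN : ∀ i, ∀ h ∈ derivedSeries G i,
      h ∈ closure {x | x ∈ derivedSeries G i ∧ Reach S (c0 ^ i) x} := by
    intro i
    induction i with
    | zero =>
        intro h hh
        have hsub : S ⊆ {x | x ∈ derivedSeries G 0 ∧ Reach S (c0 ^ 0) x} := by
          intro x hx
          exact ⟨by rw [derivedSeries_zero]; trivial, by simpa using reach_of_mem (Or.inl hx)⟩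
        have : (⊤ : Subgroup G) ≤ closure {x | x ∈ derivedSeries G 0 ∧ Reach S (c0 ^ 0) x} := by
          rw [← hS]
          exact Subgroup.closure_mono hsub
        exact this trivial
    | succ i ihgen =>
        haveI : (derivedSeries G (i + 1)).Normal := derivedSeries_normal G (i + 1)
        have hNH : derivedSeries G (i + 1) ≤ derivedSeries G i := by
          rw [derivedSeries_succ]
          rw [Subgroup.commutator_le]
          intro g1 h1 g2 h2
          rw [commutatorElement_def]
          exact mul_mem (mul_mem (mul_mem h1 h2) (inv_mem h1)) (inv_mem h2)
        have habel : ∀ x y : G, x ∈ derivedSeries G i → y ∈ derivedSeries G i →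
            ⁅x, y⁆ ∈ derivedSeries G (i + 1) := by
          intro x y hx hy
          rw [derivedSeries_succ]
          exact Subgroup.commutator_mem_commutator hx hy
        have hrep := step_rep S (derivedSeries G i) (derivedSeries G (i + 1)) hNH
          E (c0 ^ i) k hE1 hE habel hk ihgen
        have hsch := step_schreier S (derivedSeries G i) (derivedSeries G (i + 1)) hNH
          (k * (E * c0 ^ i)) (c0 ^ i) hrep ihgen
        intro h hh
        have := hsch h hh
        have harith : k * (E * c0 ^ i) + c0 ^ i + k * (E * c0 ^ i) = c0 ^ (i + 1) := by
          rw [pow_succ, hc0]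
          ring
        rwa [harith] at this
  -- short representatives at each level
  have REP : ∀ i, ∀ h ∈ derivedSeries G i, ∃ w, Reach S (k * (E * c0 ^ i)) w ∧
      w ∈ derivedSeries G i ∧ w⁻¹ * h ∈ derivedSeries G (i + 1) := by
    intro i
    haveI : (derivedSeries G (i + 1)).Normal := derivedSeries_normal G (i + 1)
    have hNH : derivedSeries G (i + 1) ≤ derivedSeries G i := by
      rw [derivedSeries_succ, Subgroup.commutator_le]
      intro g1 h1 g2 h2
      rw [commutatorElement_def]
      exact mul_mem (mul_mem (mul_mem h1 h2) (inv_mem h1)) (inv_mem h2)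
    have habel : ∀ x y : G, x ∈ derivedSeries G i → y ∈ derivedSeries G i →
        ⁅x, y⁆ ∈ derivedSeries G (i + 1) := by
      intro x y hx hy
      rw [derivedSeries_succ]
      exact Subgroup.commutator_mem_commutator hx hy
    exact step_rep S (derivedSeries G i) (derivedSeries G (i + 1)) hNH
      E (c0 ^ i) k hE1 hE habel hk (GEN i)
  -- peel off the derived series
  have PEEL : ∀ m i, derivedSeries G (i + m) = ⊥ →
      ∀ g ∈ derivedSeries G i, Reach S (m * (k * (E * c0 ^ (i + m)))) g := by
    intro m
    induction m with
    | zero =>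
        intro i hbot g hg
        rw [Nat.add_zero] at hbot
        rw [hbot, Subgroup.mem_bot] at hg
        subst hg
        exact reach_one S _
    | succ m ihm =>
        intro i hbot g hg
        obtain ⟨w, hwR, hwH, hwN⟩ := REP i g hg
        have hbot' : derivedSeries G ((i + 1) + m) = ⊥ := by
          have : (i + 1) + m = i + (m + 1) := by omega
          rwa [this]
        have hn := ihm (i + 1) hbot' (w⁻¹ * g) hwN
        have hg' : g = w * (w⁻¹ * g) := by group
        rw [hg']
        have htot := hwR.mul hn
        refine htot.mono ?_
        have hpow : c0 ^ i ≤ c0 ^ (i + (m + 1)) := Nat.pow_le_pow_right hc0pos (by omega)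
        have hpow2 : c0 ^ ((i + 1) + m) = c0 ^ (i + (m + 1)) := by
          congr 1
          omega
        rw [hpow2]
        have h1 : k * (E * c0 ^ i) ≤ k * (E * c0 ^ (i + (m + 1))) := by
          exact Nat.mul_le_mul_left k (Nat.mul_le_mul_left E hpow)
        rw [Nat.succ_mul]
        omega
  intro g
  have := PEEL d 0 (by rwa [Nat.zero_add]) g (by rw [derivedSeries_zero]; trivial)
  rwa [Nat.zero_add] at this

end Main

section Linear

variable {F : Type} [Field F] [Fintype F] {n : ℕ} (P : Subgroup (GL (Fin n) F))

/-- The coercion of an element of `P` to a matrix, as a monoid hom. -/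
def Mh : ↥P →* Matrix (Fin n) (Fin n) F :=
  (Units.coeHom (Matrix (Fin n) (Fin n) F)).comp P.subtype

/-- The canonical flag of fixed-point submodules. -/
def Wflag : ℕ → Submodule F (Fin n → F)
  | 0 => ⊥
  | (j + 1) => ⨅ g : ↥P, Submodule.comap ((Mh P g - 1).mulVecLin) (Wflag j)

lemma mem_Wflag_succ {j : ℕ} {x : Fin n → F} :
    x ∈ Wflag P (j + 1) ↔ ∀ g : ↥P, (Mh P g).mulVec x - x ∈ Wflag P j := by
  simp [Wflag, Submodule.mem_iInf, Submodule.mem_comap, Matrix.mulVecLin_apply,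
    Matrix.sub_mulVec, Matrix.one_mulVec]

lemma Mh_inv_cancel (g : ↥P) (x : Fin n → F) :
    (Mh P g).mulVec ((Mh P g⁻¹).mulVec x) = x := by
  rw [Matrix.mulVec_mulVec, ← map_mul, mul_inv_cancel, map_one, Matrix.one_mulVec]

lemma Mh_inv_cancel' (g : ↥P) (x : Fin n → F) :
    (Mh P g⁻¹).mulVec ((Mh P g).mulVec x) = x := by
  rw [Matrix.mulVec_mulVec, ← map_mul, inv_mul_cancel, map_one, Matrix.one_mulVec]

lemma Wflag_invariant : ∀ j (g : ↥P) (x : Fin n → F), x ∈ Wflag P j →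
    (Mh P g).mulVec x ∈ Wflag P j := by
  intro j
  induction j with
  | zero =>
      intro g x hx
      rw [Wflag, Submodule.mem_bot] at hx ⊢
      rw [hx, Matrix.mulVec_zero]
  | succ j ih =>
      intro g x hx
      rw [mem_Wflag_succ] at hx ⊢
      intro h
      have hgg : g * (g⁻¹ * h * g) = h * g := by group
      have hcalc : (Mh P h).mulVec ((Mh P g).mulVec x)
          = (Mh P g).mulVec ((Mh P (g⁻¹ * h * g)).mulVec x) := by
        rw [Matrix.mulVec_mulVec, Matrix.mulVec_mulVec, ← map_mul, ← map_mul, hgg]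
      have key : (Mh P h).mulVec ((Mh P g).mulVec x) - (Mh P g).mulVec x
          = (Mh P g).mulVec ((Mh P (g⁻¹ * h * g)).mulVec x - x) := by
        rw [Matrix.mulVec_sub, hcalc]
      rw [key]
      exact ih g _ (hx (g⁻¹ * h * g))

lemma Wflag_le_succ (j : ℕ) : Wflag P j ≤ Wflag P (j + 1) := by
  induction j with
  | zero => exact bot_le
  | succ j ih =>
      intro x hx
      rw [mem_Wflag_succ] at hx ⊢
      intro g
      exact ih (hx g)

lemma Wflag_mono : Monotone (Wflag P) :=
  monotone_nat_of_le_succ (Wflag_le_succ P)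

/-- Dropping property for matrices with respect to the flag. -/
def DropM (A : Matrix (Fin n) (Fin n) F) (k : ℕ) : Prop :=
  ∀ j (x : Fin n → F), x ∈ Wflag P j → A.mulVec x ∈ Wflag P (j - k)

lemma DropM.mul {A B : Matrix (Fin n) (Fin n) F} {a b : ℕ}
    (hA : DropM P A a) (hB : DropM P B b) : DropM P (A * B) (a + b) := by
  intro j x hx
  rw [← Matrix.mulVec_mulVec]
  have := hA (j - b) _ (hB j x hx)
  rwa [Nat.sub_sub, Nat.add_comm b a] at this

lemma DropM.pow {A : Matrix (Fin n) (Fin n) F} {a : ℕ} (hA : DropM P A a) :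
    ∀ m, DropM P (A ^ m) (m * a) := by
  intro m
  induction m with
  | zero =>
      intro j x hx
      rw [pow_zero, Matrix.one_mulVec, Nat.zero_mul, Nat.sub_zero]
      exact hx
  | succ m ih =>
      have h := DropM.mul P ih hA
      rw [← pow_succ] at h
      have h3 : m * a + a = (m + 1) * a := by ring
      rwa [h3] at h
end Linear

section Growth

variable {p : ℕ} [Fact p.Prime] {F : Type} [Field F] [Fintype F] [CharP F p]
variable {n : ℕ} (P : Subgroup (GL (Fin n) F))

/-- The action of an element of `P` on the quotient by a flag submodule. -/
def qmap (j : ℕ) (g : ↥P) :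
    ((Fin n → F) ⧸ Wflag P j) → ((Fin n → F) ⧸ Wflag P j) :=
  Submodule.mapQ (Wflag P j) (Wflag P j) ((Mh P g).mulVecLin)
    (fun x hx => by simpa [Matrix.mulVecLin_apply] using Wflag_invariant P j g x hx)

lemma qmap_mk (j : ℕ) (g : ↥P) (x : Fin n → F) :
    qmap P j g (Submodule.Quotient.mk x) = Submodule.Quotient.mk ((Mh P g).mulVec x) := by
  rw [qmap, Submodule.mapQ_apply, Matrix.mulVecLin_apply]

/-- The action of `P` on the quotient by a flag submodule, as a hom to `Function.End`. -/
def qAct (j : ℕ) : ↥P →* Function.End ((Fin n → F) ⧸ Wflag P j) where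
  toFun g := qmap P j g
  map_one' := by
    funext q
    obtain ⟨x, rfl⟩ := Submodule.Quotient.mk_surjective (Wflag P j) q
    show qmap P j 1 (Submodule.Quotient.mk x) = Submodule.Quotient.mk x
    rw [qmap_mk, map_one, Matrix.one_mulVec]
  map_mul' g h := by
    funext q
    obtain ⟨x, rfl⟩ := Submodule.Quotient.mk_surjective (Wflag P j) q
    show qmap P j (g * h) (Submodule.Quotient.mk x)
      = qmap P j g (qmap P j h (Submodule.Quotient.mk x))
    rw [qmap_mk, qmap_mk, qmap_mk, map_mul, ← Matrix.mulVec_mulVec]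

lemma Wflag_lt_succ (hP : IsPGroup p ↥P) {j : ℕ} (hj : Wflag P j ≠ ⊤) :
    ∃ x, x ∈ Wflag P (j + 1) ∧ x ∉ Wflag P j := by
  classical
  letI act : MulAction ↥P ((Fin n → F) ⧸ Wflag P j) := MulAction.ofEndHom (qAct P j)
  have hsmul : ∀ (g : ↥P) (x : Fin n → F),
      g • (Submodule.Quotient.mk x : (Fin n → F) ⧸ Wflag P j)
        = Submodule.Quotient.mk ((Mh P g).mulVec x) := by
    intro g x
    show qmap P j g (Submodule.Quotient.mk x) = _
    rw [qmap_mk]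
  obtain ⟨x₀, hx₀⟩ : ∃ x₀ : Fin n → F, x₀ ∉ Wflag P j := by
    by_contra hcon
    push_neg at hcon
    exact hj (Submodule.eq_top_iff'.2 hcon)
  have hx₀ne : (Submodule.Quotient.mk x₀ : (Fin n → F) ⧸ Wflag P j) ≠ 0 := by
    simpa [Submodule.Quotient.mk_eq_zero] using hx₀
  haveI : Nontrivial ((Fin n → F) ⧸ Wflag P j) := ⟨_, _, hx₀ne⟩
  haveI : Finite ((Fin n → F) ⧸ Wflag P j) :=
    Finite.of_surjective _ (Submodule.Quotient.mk_surjective (Wflag P j))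
  haveI : Module.Finite F ((Fin n → F) ⧸ Wflag P j) := Module.Finite.of_finite (R := F)
  have hpQ : p ∣ Nat.card ((Fin n → F) ⧸ Wflag P j) := by
    letI : Fintype ((Fin n → F) ⧸ Wflag P j) := Fintype.ofFinite _
    have hcardQ : Fintype.card ((Fin n → F) ⧸ Wflag P j)
        = Fintype.card F ^ (Module.finrank F ((Fin n → F) ⧸ Wflag P j)) := by
      have h0 := Module.card_fintype (Module.finBasis F ((Fin n → F) ⧸ Wflag P j))
      simpa [Fintype.card_fin] using h0
    have hrk : 0 < Module.finrank F ((Fin n → F) ⧸ Wflag P j) := Module.finrank_pos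
    obtain ⟨f, hpp, hcF⟩ := FiniteField.card F p
    have hpF : p ∣ Fintype.card F := by
      rw [hcF]
      exact dvd_pow_self p (by exact_mod_cast f.ne_zero)
    rw [Nat.card_eq_fintype_card, hcardQ]
    exact dvd_trans hpF (dvd_pow_self _ hrk.ne')
  have hmod := hP.card_modEq_card_fixedPoints ((Fin n → F) ⧸ Wflag P j)
  have h0fix : (0 : (Fin n → F) ⧸ Wflag P j) ∈
      MulAction.fixedPoints ↥P ((Fin n → F) ⧸ Wflag P j) := by
    intro g
    have h00 : (0 : (Fin n → F) ⧸ Wflag P j) = Submodule.Quotient.mk 0 :=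
      (Submodule.Quotient.mk_zero _).symm
    rw [h00, hsmul, Matrix.mulVec_zero]
  haveI : Nonempty ↥(MulAction.fixedPoints ↥P ((Fin n → F) ⧸ Wflag P j)) := ⟨⟨0, h0fix⟩⟩
  have hfixpos : 0 < Nat.card ↥(MulAction.fixedPoints ↥P ((Fin n → F) ⧸ Wflag P j)) :=
    Nat.card_pos
  have hfixdvd : p ∣ Nat.card ↥(MulAction.fixedPoints ↥P ((Fin n → F) ⧸ Wflag P j)) := by
    have h1 : Nat.card ↥(MulAction.fixedPoints ↥P ((Fin n → F) ⧸ Wflag P j)) ≡ 0 [MOD p] :=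
      hmod.symm.trans ((Nat.modEq_zero_iff_dvd).2 hpQ)
    exact (Nat.modEq_zero_iff_dvd).1 h1
  have hfix2 : 1 < Nat.card ↥(MulAction.fixedPoints ↥P ((Fin n → F) ⧸ Wflag P j)) := by
    have hp2 : 2 ≤ p := (Fact.out : p.Prime).two_le
    have := Nat.le_of_dvd hfixpos hfixdvd
    omega
  letI : Fintype ↥(MulAction.fixedPoints ↥P ((Fin n → F) ⧸ Wflag P j)) := Fintype.ofFinite _
  rw [Nat.card_eq_fintype_card] at hfix2
  obtain ⟨b, hb⟩ := Fintype.exists_ne_of_one_lt_card hfix2 ⟨0, h0fix⟩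
  have hbne : (b : (Fin n → F) ⧸ Wflag P j) ≠ 0 := by
    intro hb0
    exact hb (Subtype.ext hb0)
  obtain ⟨x, hx⟩ := Submodule.Quotient.mk_surjective (Wflag P j) (b : (Fin n → F) ⧸ Wflag P j)
  refine ⟨x, ?_, ?_⟩
  · rw [mem_Wflag_succ]
    intro g
    have hfixb := b.2 g
    rw [← hx, hsmul] at hfixb
    rw [← Submodule.Quotient.eq]
    exact hfixb
  · intro hxW
    apply hbne
    rw [← hx]
    simpa [Submodule.Quotient.mk_eq_zero] using hxW

lemma Wflag_top (hP : IsPGroup p ↥P) : Wflag P n = ⊤ := by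
  have claim : ∀ j, Wflag P j = ⊤ ∨ j ≤ Module.finrank F (Wflag P j) := by
    intro j
    induction j with
    | zero => exact Or.inr (Nat.zero_le _)
    | succ j ih =>
        by_cases htop : Wflag P (j + 1) = ⊤
        · exact Or.inl htop
        · have hjne : Wflag P j ≠ ⊤ := by
            intro h
            exact htop (eq_top_iff.2 (h ▸ Wflag_le_succ P j))
          rcases ih with h | h
          · exact absurd h hjne
          · obtain ⟨x, hx1, hx2⟩ := Wflag_lt_succ P hP hjne
            have hlt : Wflag P j < Wflag P (j + 1) :=
              lt_of_le_of_ne (Wflag_le_succ P j) (fun heq => hx2 (heq ▸ hx1))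
            have := Submodule.finrank_lt_finrank_of_lt hlt
            exact Or.inr (by omega)
  rcases claim n with h | h
  · exact h
  · by_contra htop
    have hlt : Wflag P n < ⊤ := lt_top_iff_ne_top.2 htop
    have h2 := Submodule.finrank_lt (K := F) (V := Fin n → F) htop
    rw [Module.finrank_pi F] at h2
    simp at h2
    omega

end Growth

section PkChain

variable {F : Type} [Field F] [Fintype F] {n : ℕ} (P : Subgroup (GL (Fin n) F))

/-- The subgroup of elements dropping the flag by `k` steps. -/
def Pk (k : ℕ) : Subgroup ↥P where
  carrier := {g | ∀ j (x : Fin n → F), x ∈ Wflag P j →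
    (Mh P g).mulVec x - x ∈ Wflag P (j - k)}
  one_mem' := by
    intro j x hx
    rw [map_one, Matrix.one_mulVec, sub_self]
    exact zero_mem _
  mul_mem' := by
    intro g h hg hh j x hx
    have hu : (Mh P h).mulVec x - x ∈ Wflag P (j - k) := hh j x hx
    have h1 : (Mh P g).mulVec ((Mh P h).mulVec x - x) - ((Mh P h).mulVec x - x)
        ∈ Wflag P (j - k) := Wflag_mono P (Nat.sub_le _ _) (hg (j - k) _ hu)
    have h2 : (Mh P g).mulVec x - x ∈ Wflag P (j - k) := hg j x hx
    have key : (Mh P (g * h)).mulVec x - x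
        = ((Mh P g).mulVec ((Mh P h).mulVec x - x) - ((Mh P h).mulVec x - x))
          + ((Mh P h).mulVec x - x) + ((Mh P g).mulVec x - x) := by
      rw [map_mul, ← Matrix.mulVec_mulVec, Matrix.mulVec_sub]
      abel
    rw [key]
    exact add_mem (add_mem h1 hu) h2
  inv_mem' := by
    intro g hg j x hx
    have hy : (Mh P g⁻¹).mulVec x ∈ Wflag P j := Wflag_invariant P j g⁻¹ x hx
    have h1 : (Mh P g).mulVec ((Mh P g⁻¹).mulVec x) - (Mh P g⁻¹).mulVec x
        ∈ Wflag P (j - k) := hg j _ hy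
    have key : (Mh P g⁻¹).mulVec x - x
        = -((Mh P g).mulVec ((Mh P g⁻¹).mulVec x) - (Mh P g⁻¹).mulVec x) := by
      rw [Mh_inv_cancel]
      abel
    rw [key]
    exact neg_mem h1

lemma mem_Pk_one (g : ↥P) : g ∈ Pk P 1 := by
  intro j x hx
  cases j with
  | zero =>
      rw [Wflag, Submodule.mem_bot] at hx
      rw [hx, Matrix.mulVec_zero, sub_self]
      exact zero_mem _
  | succ j =>
      rw [mem_Wflag_succ] at hx
      have : j + 1 - 1 = j := rfl
      rw [this]
      exact hx g

lemma Pk_antitone {k k' : ℕ} (hkk : k' ≤ k) : Pk P k ≤ Pk P k' := by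
  intro g hg j x hx
  exact Wflag_mono P (Nat.sub_le_sub_left hkk j) (hg j x hx)

lemma commutator_mem_Pk {a b : ℕ} {g h : ↥P} (hg : g ∈ Pk P a) (hh : h ∈ Pk P b) :
    ⁅g, h⁆ ∈ Pk P (a + b) := by
  intro j x hx
  set z := (Mh P g⁻¹).mulVec ((Mh P h⁻¹).mulVec x) with hzdef
  have hz : z ∈ Wflag P j :=
    Wflag_invariant P j g⁻¹ _ (Wflag_invariant P j h⁻¹ x hx)
  have hxz : x = (Mh P h).mulVec ((Mh P g).mulVec z) := by
    rw [hzdef, Mh_inv_cancel, Mh_inv_cancel]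
  have hcx : (Mh P ⁅g, h⁆).mulVec x = (Mh P g).mulVec ((Mh P h).mulVec z) := by
    rw [commutatorElement_def, map_mul, map_mul, map_mul]
    rw [← Matrix.mulVec_mulVec, ← Matrix.mulVec_mulVec, ← Matrix.mulVec_mulVec]
  have hv : (Mh P h).mulVec z - z ∈ Wflag P (j - b) := hh j z hz
  have hw : (Mh P g).mulVec z - z ∈ Wflag P (j - a) := hg j z hz
  have h1 : (Mh P g).mulVec ((Mh P h).mulVec z - z) - ((Mh P h).mulVec z - z)
      ∈ Wflag P (j - (a + b)) := by
    have := hg (j - b) _ hv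
    rwa [Nat.sub_sub, Nat.add_comm b a] at this
  have h2 : (Mh P h).mulVec ((Mh P g).mulVec z - z) - ((Mh P g).mulVec z - z)
      ∈ Wflag P (j - (a + b)) := by
    have := hh (j - a) _ hw
    rwa [Nat.sub_sub] at this
  have key : (Mh P ⁅g, h⁆).mulVec x - x
      = ((Mh P g).mulVec ((Mh P h).mulVec z - z) - ((Mh P h).mulVec z - z))
        - ((Mh P h).mulVec ((Mh P g).mulVec z - z) - ((Mh P g).mulVec z - z)) := by
    rw [hcx]
    conv_lhs => rw [hxz]
    rw [Matrix.mulVec_sub, Matrix.mulVec_sub]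
    abel
  rw [key]
  exact sub_mem h1 h2

lemma matrix_eq_one_of_mulVec (A : Matrix (Fin n) (Fin n) F)
    (h : ∀ x, A.mulVec x = x) : A = 1 := by
  classical
  ext i j
  have h1 := congrFun (h (Pi.single j 1)) i
  rw [Matrix.mulVec_single] at h1
  simp only [MulOpposite.op_one, one_smul, Matrix.col_apply] at h1
  rw [h1, Matrix.one_apply, Pi.single_apply]

lemma Mh_injective : Function.Injective (Mh P) := by
  intro a b hab
  exact Subtype.ext (Units.ext hab)

lemma Pk_bot (hWtop : Wflag P n = ⊤) : Pk P n = ⊥ := by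
  rw [eq_bot_iff]
  intro g hg
  rw [Subgroup.mem_bot]
  have hall : ∀ x : Fin n → F, (Mh P g).mulVec x = x := by
    intro x
    have hx : x ∈ Wflag P n := by rw [hWtop]; trivial
    have := hg n x hx
    rw [Nat.sub_self, Wflag, Submodule.mem_bot, sub_eq_zero] at this
    exact this
  have hMg : Mh P g = 1 := matrix_eq_one_of_mulVec _ hall
  apply Mh_injective P
  rw [map_one, hMg]

lemma derived_le_Pk : ∀ i, derivedSeries ↥P i ≤ Pk P (2 ^ i) := by
  intro i
  induction i with
  | zero =>
      intro g _
      rw [pow_zero]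
      exact mem_Pk_one P g
  | succ i ih =>
      rw [derivedSeries_succ, Subgroup.commutator_le]
      intro g hg h hh
      have := commutator_mem_Pk P (ih hg) (ih hh)
      have h2 : 2 ^ i + 2 ^ i = 2 ^ (i + 1) := by ring
      rwa [h2] at this

lemma derived_series_bot (hWtop : Wflag P n = ⊤) :
    derivedSeries ↥P (Nat.clog 2 n) = ⊥ := by
  rw [eq_bot_iff, ← Pk_bot P hWtop]
  refine le_trans (derived_le_Pk P (Nat.clog 2 n)) (Pk_antitone P ?_)
  exact Nat.le_pow_clog (by norm_num) n

end PkChain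

section Exponent

variable {p : ℕ} [Fact p.Prime] {F : Type} [Field F] [Fintype F] [CharP F p]
variable {n : ℕ} (P : Subgroup (GL (Fin n) F))

lemma pow_exp_eq_one (hn : 1 ≤ n) (hWtop : Wflag P n = ⊤) (g : ↥P) :
    g ^ (p ^ Nat.clog p n) = 1 := by
  classical
  haveI : Nonempty (Fin n) := Fin.pos_iff_nonempty.1 hn
  have hp1 : 1 < p := (Fact.out : p.Prime).one_lt
  have hnE : n ≤ p ^ Nat.clog p n := Nat.le_pow_clog hp1 n
  have hdrop1 : DropM P (Mh P g - 1) 1 := by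
    intro j x hx
    have h0 := mem_Pk_one P g j x hx
    rwa [Matrix.sub_mulVec, Matrix.one_mulVec]
  have hkill : ∀ x : Fin n → F, ((Mh P g - 1) ^ (p ^ Nat.clog p n)).mulVec x = 0 := by
    intro x
    have hx : x ∈ Wflag P n := by rw [hWtop]; trivial
    have h1 : ((Mh P g - 1) ^ n).mulVec x ∈ Wflag P 0 := by
      have h2 := DropM.pow P hdrop1 n n x hx
      rwa [Nat.mul_one, Nat.sub_self] at h2
    rw [Wflag, Submodule.mem_bot] at h1
    have hEeq : p ^ Nat.clog p n = (p ^ Nat.clog p n - n) + n := by omega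
    rw [hEeq, pow_add, ← Matrix.mulVec_mulVec, h1, Matrix.mulVec_zero]
  have hfrob : (Mh P g - 1) ^ (p ^ Nat.clog p n) = (Mh P g) ^ (p ^ Nat.clog p n) - 1 := by
    have h3 := sub_pow_char_pow_of_commute (R := Matrix (Fin n) (Fin n) F) p (Nat.clog p n)
      (Commute.one_right (Mh P g))
    rw [one_pow] at h3
    exact h3
  have hall : ∀ x : Fin n → F, ((Mh P g) ^ (p ^ Nat.clog p n)).mulVec x = x := by
    intro x
    have h4 := hkill x
    rw [hfrob, Matrix.sub_mulVec, Matrix.one_mulVec, sub_eq_zero] at h4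
    exact h4
  apply Mh_injective P
  rw [map_pow, map_one]
  exact matrix_eq_one_of_mulVec _ hall

lemma exp_le_mul (hn : 1 ≤ n) : p ^ Nat.clog p n ≤ p * n := by
  have hp1 : 1 < p := (Fact.out : p.Prime).one_lt
  rcases Nat.lt_or_ge n 2 with h2 | h2
  · have hn1 : n = 1 := by omega
    subst hn1
    rw [Nat.clog_one_right, pow_zero]
    nlinarith
  · have hc1 : 0 < Nat.clog p n := Nat.clog_pos hp1 h2
    have hlt : p ^ (Nat.clog p n - 1) < n := by
      have := Nat.pow_pred_clog_lt_self hp1 (x := n) (by omega)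
      simpa [Nat.pred_eq_sub_one] using this
    have heq : p ^ Nat.clog p n = p * p ^ (Nat.clog p n - 1) := by
      rw [← pow_succ']
      congr 1
      omega
    rw [heq]
    exact Nat.mul_le_mul_left p (by omega)

end Exponent

section Numeric

lemma sq_le_two_pow : ∀ m : ℕ, m * m ≤ 2 ^ (m + 1) := by
  intro m
  induction m with
  | zero => simp
  | succ m ih =>
      have hm : m < 2 ^ m := Nat.lt_two_pow_self (n := m)
      have h2 : 2 ^ (m + 1) = 2 * 2 ^ m := by rw [pow_succ]; ring
      have h3 : 2 ^ (m + 2) = 4 * 2 ^ m := by rw [pow_succ, pow_succ]; ring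
      have hexp : (m + 1) * (m + 1) = m * m + 2 * m + 1 := by ring
      omega

lemma clog_sq_bound (n : ℕ) (hn : 1 ≤ n) :
    Nat.clog 2 n + (2 + 3 * Nat.clog 2 n) + (4 + 3 * Nat.clog 2 n) * Nat.clog 2 n
      ≤ 60 * n := by
  rcases Nat.lt_or_ge n 2 with h2 | h2
  · have hn1 : n = 1 := by omega
    subst hn1
    rw [Nat.clog_one_right]
    omega
  · set c1 := Nat.clog 2 n with hc1def
    have hc1 : 0 < c1 := Nat.clog_pos (by norm_num) h2
    have hlt : 2 ^ (c1 - 1) < n := by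
      have := Nat.pow_pred_clog_lt_self (b := 2) (by norm_num) (x := n) (by omega)
      simpa [Nat.pred_eq_sub_one] using this
    have hsq : c1 * c1 ≤ 2 ^ (c1 + 1) := sq_le_two_pow c1
    have h4 : 2 ^ (c1 + 1) = 4 * 2 ^ (c1 - 1) := by
      have : c1 + 1 = (c1 - 1) + 2 := by omega
      rw [this, pow_add]
      ring
    have hc1s : c1 ≤ c1 * c1 := Nat.le_mul_of_pos_left c1 hc1
    have hexpand : (4 + 3 * c1) * c1 = 4 * c1 + 3 * (c1 * c1) := by ring
    omega

end Numeric

section Final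

lemma card_le_pow (F : Type) [Field F] [Fintype F] (n : ℕ) (P : Subgroup (GL (Fin n) F)) :
    Nat.card ↥P ≤ Fintype.card F ^ (n * n) := by
  classical
  have hinj : Function.Injective
      (fun g : ↥P => (fun i j => Mh P g i j : Fin n → Fin n → F)) := by
    intro a b hab
    apply Mh_injective P
    ext i j
    exact congrFun (congrFun hab i) j
  have h1 : Nat.card ↥P ≤ Nat.card (Fin n → Fin n → F) :=
    Nat.card_le_card_of_injective _ hinj
  have h2 : Nat.card (Fin n → Fin n → F) = Fintype.card F ^ (n * n) := by
    rw [Nat.card_eq_fintype_card]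
    rw [Fintype.card_fun, Fintype.card_fun, Fintype.card_fin, ← pow_mul]
  omega

/-- There is an absolute constant `c > 0` such that for every prime `p`,
every finite field `F` of characteristic `p` (whose cardinality `q` is then a power of `p`),
every `n ≥ 1` and every `p`-subgroup `P` of `GL(n, F)`, one has `diam P ≤ q ^ (c * n)`. -/
theorem diam_p_subgroup_le :
    ∃ c : ℝ, 0 < c ∧
      ∀ (p : ℕ), p.Prime →
        ∀ (F : Type) [Field F] [Fintype F], CharP F p →
          ∀ (n : ℕ), 1 ≤ n →
            ∀ P : Subgroup (GL (Fin n) F), IsPGroup p P →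
              (diam P : ℝ) ≤ (Fintype.card F : ℝ) ^ (c * n) := by
  refine ⟨60, by norm_num, ?_⟩
  intro p hp F hF1 hF2 hchar n hn P hP
  haveI : Fact p.Prime := ⟨hp⟩
  have hq2 : 2 ≤ Fintype.card F := Fintype.one_lt_card
  obtain ⟨f, hpp, hcF⟩ := FiniteField.card F p
  have hpq : p ≤ Fintype.card F := by
    rw [hcF]
    exact Nat.le_self_pow (by exact_mod_cast f.ne_zero) p
  have hWtop := Wflag_top P hP
  have hd := derived_series_bot P hWtop
  have hE : ∀ g : ↥P, g ^ (p ^ Nat.clog p n) = 1 := pow_exp_eq_one P hn hWtop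
  have hE1 : 1 ≤ p ^ Nat.clog p n := Nat.one_le_pow _ _ hp.pos
  have hcardpos : 0 < Nat.card ↥P := Nat.card_pos
  have hk : Nat.card ↥P ≤ 2 ^ (Nat.log 2 (Nat.card ↥P) + 1) :=
    le_of_lt (Nat.lt_pow_succ_log_self (by norm_num) _)
  set q := Fintype.card F with hqdef
  set E := p ^ Nat.clog p n with hEdef
  set k := Nat.log 2 (Nat.card ↥P) + 1 with hkdef
  set d := Nat.clog 2 n with hddef
  set B := d * (k * (E * (2 * k * E + 1) ^ d)) with hBdef
  have hdiamLe : diamLe ↥P B := by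
    intro S hS g
    exact reach_all_of_derived E k d hE1 hE hk hd S hS g
  have hdiam : diam ↥P ≤ B := Nat.sInf_le hdiamLe
  -- arithmetic
  have hL : Nat.log 2 q < q := by
    have h1 : 2 ^ Nat.log 2 q ≤ q := Nat.pow_log_le_self 2 (by omega)
    have h2 : Nat.log 2 q < 2 ^ Nat.log 2 q := Nat.lt_two_pow_self
    omega
  have hcardP : Nat.card ↥P ≤ q ^ (n * n) := card_le_pow F n P
  have hkle : k ≤ (Nat.log 2 q + 1) * (n * n) := by
    have h1 : q ^ (n * n) < (2 ^ (Nat.log 2 q + 1)) ^ (n * n) :=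
      Nat.pow_lt_pow_left (Nat.lt_pow_succ_log_self (by norm_num) q) (by nlinarith)
    have h2 : Nat.card ↥P < 2 ^ ((Nat.log 2 q + 1) * (n * n)) := by
      rw [pow_mul]
      omega
    have h3 : Nat.log 2 (Nat.card ↥P) < (Nat.log 2 q + 1) * (n * n) :=
      Nat.log_lt_of_lt_pow (by omega) h2
    omega
  have hEle : E ≤ q * n := le_trans (exp_le_mul hn) (Nat.mul_le_mul_right n hpq)
  have hnq : n ≤ q ^ d := le_trans (Nat.le_pow_clog (by norm_num) n)
    (Nat.pow_le_pow_left hq2 d)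
  have hdq : d ≤ q ^ d := le_trans (le_of_lt (Nat.lt_two_pow_self (n := d)))
    (Nat.pow_le_pow_left hq2 d)
  have hkE : k * E ≤ q ^ (2 + 3 * d) := by
    calc k * E ≤ ((Nat.log 2 q + 1) * (n * n)) * (q * n) := Nat.mul_le_mul hkle hEle
      _ = ((Nat.log 2 q + 1) * q) * (n * (n * n)) := by ring
      _ ≤ (q * q) * (q ^ d * (q ^ d * q ^ d)) := by
          apply Nat.mul_le_mul
          · exact Nat.mul_le_mul (by omega) le_rfl
          · exact Nat.mul_le_mul hnq (Nat.mul_le_mul hnq hnq)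
      _ = q ^ (2 + 3 * d) := by
          rw [show 2 + 3 * d = 1 + 1 + (d + (d + d)) by ring]
          rw [pow_add, pow_add, pow_add, pow_add, pow_one]
  have hkE1 : 1 ≤ k * E := by
    have : 1 ≤ k := by omega
    exact Nat.one_le_iff_ne_zero.2 (Nat.mul_ne_zero (by omega) (by omega))
  have hbase : 2 * k * E + 1 ≤ q ^ (4 + 3 * d) := by
    calc 2 * k * E + 1 = 2 * (k * E) + 1 := by ring
      _ ≤ 3 * (k * E) := by omega
      _ ≤ 3 * q ^ (2 + 3 * d) := Nat.mul_le_mul_left 3 hkE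
      _ ≤ (q * q) * q ^ (2 + 3 * d) := Nat.mul_le_mul_right _ (by nlinarith)
      _ = q ^ 2 * q ^ (2 + 3 * d) := by rw [pow_two]
      _ = q ^ (2 + (2 + 3 * d)) := (pow_add q 2 (2 + 3 * d)).symm
      _ = q ^ (4 + 3 * d) := by congr 1; omega
  have hBle : B ≤ q ^ (60 * n) := by
    calc B = d * ((k * E) * (2 * k * E + 1) ^ d) := by rw [hBdef]; ring
      _ ≤ (q ^ d) * ((q ^ (2 + 3 * d)) * (q ^ (4 + 3 * d)) ^ d) := by
          apply Nat.mul_le_mul hdq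
          exact Nat.mul_le_mul hkE (Nat.pow_le_pow_left hbase d)
      _ = q ^ (d + ((2 + 3 * d) + (4 + 3 * d) * d)) := by
          rw [← pow_mul, ← pow_add, ← pow_add]
      _ ≤ q ^ (60 * n) := by
          apply Nat.pow_le_pow_right (by omega)
          have hcb := clog_sq_bound n hn
          rw [← hddef] at hcb
          have hexp : d + ((2 + 3 * d) + (4 + 3 * d) * d)
              = d + (2 + 3 * d) + (4 + 3 * d) * d := by ring
          rw [hexp]
          exact hcb
  have hfinal : diam ↥P ≤ q ^ (60 * n) := le_trans hdiam hBle
  have hcast : ((60 : ℝ) * (n : ℝ)) = ((60 * n : ℕ) : ℝ) := by push_cast; ring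
  rw [hcast, Real.rpow_natCast]
  exact_mod_cast hfinal

end Final
end

section
/- Let p be a prime, q a power of p, and m = 2^k for an integer k ≥ 1. Then every Sylow p-subgroup S of GL(m, F_q) has an elementary abelian normal subgroup A (abelian of exponent p) with |A| = q^(m²/4) such that the quotient S/A is isomorphic to the direct product of two Sylow p-subgroups of GL(m/2, F_q). -/
set_option linter.unusedSectionVars false

open Matrix Function

namespace SylowGLAux

variable {F : Type} [Field F] [Fintype F] {n : ℕ}

def bmk (a d : GL (Fin n) F) (b : Matrix (Fin n) (Fin n) F) : GL (Fin n ⊕ Fin n) F where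
  val := fromBlocks a.val b 0 d.val
  inv := fromBlocks a.inv (-(a.inv * b * d.inv)) 0 d.inv
  val_inv := by
    rw [fromBlocks_multiply]
    have h1 : a.val * a.inv = 1 := a.val_inv
    have h2 : d.val * d.inv = 1 := d.val_inv
    have h3 : a.val * -(a.inv * b * d.inv) + b * d.inv = 0 := by
      rw [mul_neg, ← mul_assoc, ← mul_assoc, h1, one_mul, neg_add_cancel]
    simp only [Matrix.mul_zero, Matrix.zero_mul, add_zero, zero_add]
    rw [h1, h2, h3, fromBlocks_one]
  inv_val := by
    rw [fromBlocks_multiply]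
    have h1 : a.inv * a.val = 1 := a.inv_val
    have h2 : d.inv * d.val = 1 := d.inv_val
    have h3 : a.inv * b + -(a.inv * b * d.inv) * d.val = 0 := by
      rw [neg_mul, mul_assoc (a.inv * b) d.inv d.val, h2, mul_one, add_neg_cancel]
    simp only [Matrix.mul_zero, Matrix.zero_mul, add_zero, zero_add]
    rw [h1, h2, h3, fromBlocks_one]

lemma bmk_val (a d : GL (Fin n) F) (b) : (bmk a d b).val = fromBlocks a.val b 0 d.val := rfl

lemma bmk_mul (a a' d d' : GL (Fin n) F) (b b') :
    bmk a d b * bmk a' d' b' = bmk (a * a') (d * d') (a.val * b' + b * d'.val) := by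
  apply Units.ext
  rw [Units.val_mul, bmk_val, bmk_val, bmk_val, fromBlocks_multiply]
  simp [Units.val_mul]

lemma bmk_one : bmk (n := n) (F := F) 1 1 0 = 1 := by
  apply Units.ext
  simp [bmk_val, Units.val_one, fromBlocks_one]

lemma bmk_inv (a d : GL (Fin n) F) (b) :
    (bmk a d b)⁻¹ = bmk a⁻¹ d⁻¹ (-(a.inv * b * d.inv)) := by
  apply Units.ext
  rfl

lemma bmk_injective {a a' d d' : GL (Fin n) F} {b b'}
    (h : bmk a d b = bmk a' d' b') : a = a' ∧ d = d' ∧ b = b' := by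
  have hv := congrArg Units.val h
  rw [bmk_val, bmk_val] at hv
  have h11 := congrArg toBlocks₁₁ hv
  have h22 := congrArg toBlocks₂₂ hv
  have h12 := congrArg toBlocks₁₂ hv
  simp only [toBlocks_fromBlocks₁₁, toBlocks_fromBlocks₂₂, toBlocks_fromBlocks₁₂] at h11 h22 h12
  exact ⟨Units.ext h11, Units.ext h22, h12⟩

variable (Q₁ Q₂ : Subgroup (GL (Fin n) F))

def P0 : Subgroup (GL (Fin n ⊕ Fin n) F) where
  carrier := {x | ∃ a, a ∈ Q₁ ∧ ∃ d, d ∈ Q₂ ∧ ∃ b, x = bmk a d b}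
  one_mem' := ⟨1, Q₁.one_mem, 1, Q₂.one_mem, 0, bmk_one.symm⟩
  mul_mem' := by
    rintro x y ⟨a, ha, d, hd, b, rfl⟩ ⟨a', ha', d', hd', b', rfl⟩
    exact ⟨a * a', Q₁.mul_mem ha ha', d * d', Q₂.mul_mem hd hd', _,
      bmk_mul a a' d d' b b'⟩
  inv_mem' := by
    rintro x ⟨a, ha, d, hd, b, rfl⟩
    exact ⟨a⁻¹, Q₁.inv_mem ha, d⁻¹, Q₂.inv_mem hd, _, bmk_inv a d b⟩

variable {Q₁ Q₂}

noncomputable def aOf (x : P0 Q₁ Q₂) : GL (Fin n) F := x.2.choose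
noncomputable def dOf (x : P0 Q₁ Q₂) : GL (Fin n) F := x.2.choose_spec.2.choose
noncomputable def bOf (x : P0 Q₁ Q₂) : Matrix (Fin n) (Fin n) F :=
  x.2.choose_spec.2.choose_spec.2.choose

lemma aOf_mem (x : P0 Q₁ Q₂) : aOf x ∈ Q₁ := x.2.choose_spec.1
lemma dOf_mem (x : P0 Q₁ Q₂) : dOf x ∈ Q₂ := x.2.choose_spec.2.choose_spec.1
lemma eq_bmk (x : P0 Q₁ Q₂) : (x : GL (Fin n ⊕ Fin n) F) = bmk (aOf x) (dOf x) (bOf x) :=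
  x.2.choose_spec.2.choose_spec.2.choose_spec

lemma of_eq {x : P0 Q₁ Q₂} {a d b} (h : (x : GL (Fin n ⊕ Fin n) F) = bmk a d b) :
    aOf x = a ∧ dOf x = d ∧ bOf x = b :=
  bmk_injective ((eq_bmk x).symm.trans h)

noncomputable def φ0 : P0 Q₁ Q₂ →* Q₁ × Q₂ where
  toFun x := (⟨aOf x, aOf_mem x⟩, ⟨dOf x, dOf_mem x⟩)
  map_one' := by
    obtain ⟨h1, h2, -⟩ := of_eq (x := (1 : P0 Q₁ Q₂))
      (by rw [OneMemClass.coe_one, ← bmk_one])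
    refine Prod.ext (Subtype.ext ?_) (Subtype.ext ?_) <;> simp [h1, h2]
  map_mul' x y := by
    obtain ⟨h1, h2, -⟩ := of_eq (x := x * y)
      (by rw [Subgroup.coe_mul, eq_bmk x, eq_bmk y, bmk_mul])
    refine Prod.ext (Subtype.ext ?_) (Subtype.ext ?_) <;> simp [h1, h2]

lemma φ0_surjective : Surjective (φ0 (Q₁ := Q₁) (Q₂ := Q₂)) := by
  rintro ⟨⟨a, ha⟩, ⟨d, hd⟩⟩
  refine ⟨⟨bmk a d 0, ⟨a, ha, d, hd, 0, rfl⟩⟩, ?_⟩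
  obtain ⟨h1, h2, -⟩ := of_eq (x := (⟨bmk a d 0, ⟨a, ha, d, hd, 0, rfl⟩⟩ : P0 Q₁ Q₂)) rfl
  exact Prod.ext (Subtype.ext h1) (Subtype.ext h2)

lemma mem_ker_iff (x : P0 Q₁ Q₂) :
    x ∈ (φ0 (Q₁ := Q₁) (Q₂ := Q₂)).ker ↔
      (x : GL (Fin n ⊕ Fin n) F) = bmk 1 1 (bOf x) := by
  rw [MonoidHom.mem_ker]
  constructor
  · intro h
    have h1 : aOf x = 1 := congrArg (fun z : (Q₁ × Q₂) => (z.1 : GL (Fin n) F)) h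
    have h2 : dOf x = 1 := congrArg (fun z : (Q₁ × Q₂) => (z.2 : GL (Fin n) F)) h
    rw [eq_bmk x, h1, h2]
  · intro h
    obtain ⟨h1, h2, -⟩ := of_eq h
    refine Prod.ext (Subtype.ext ?_) (Subtype.ext ?_) <;> simp [φ0, h1, h2]


lemma unip_mul (b b' : Matrix (Fin n) (Fin n) F) :
    bmk (1 : GL (Fin n) F) 1 b * bmk 1 1 b' = bmk 1 1 (b + b') := by
  rw [bmk_mul]
  simp [Units.val_one, add_comm]

lemma unip_pow (b : Matrix (Fin n) (Fin n) F) (j : ℕ) :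
    (bmk (1 : GL (Fin n) F) 1 b) ^ j = bmk 1 1 (j • b) := by
  induction j with
  | zero => rw [pow_zero, zero_nsmul, bmk_one]
  | succ j ih => rw [pow_succ, ih, unip_mul, ← succ_nsmul]

lemma ker_comm {x y : P0 Q₁ Q₂} (hx : x ∈ (φ0 (Q₁ := Q₁) (Q₂ := Q₂)).ker)
    (hy : y ∈ (φ0 (Q₁ := Q₁) (Q₂ := Q₂)).ker) : x * y = y * x := by
  have hx' := (mem_ker_iff x).1 hx
  have hy' := (mem_ker_iff y).1 hy
  apply Subtype.ext
  rw [Subgroup.coe_mul, Subgroup.coe_mul, hx', hy', unip_mul, unip_mul, add_comm]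

lemma ker_pow_p (pp : ℕ) [CharP F pp] {x : P0 Q₁ Q₂}
    (hx : x ∈ (φ0 (Q₁ := Q₁) (Q₂ := Q₂)).ker) : x ^ pp = 1 := by
  have hx' := (mem_ker_iff x).1 hx
  apply Subtype.ext
  rw [SubmonoidClass.coe_pow, hx', unip_pow, OneMemClass.coe_one]
  have : (pp • bOf x : Matrix (Fin n) (Fin n) F) = 0 := by
    ext i j
    simp only [Matrix.smul_apply, Matrix.zero_apply, nsmul_eq_mul]
    rw [CharP.cast_eq_zero F pp, zero_mul]
  rw [this, bmk_one]

noncomputable def kerEquiv :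
    (φ0 (Q₁ := Q₁) (Q₂ := Q₂)).ker ≃ Matrix (Fin n) (Fin n) F where
  toFun x := bOf x.1
  invFun b := ⟨⟨bmk 1 1 b, ⟨1, Q₁.one_mem, 1, Q₂.one_mem, b, rfl⟩⟩, by
    rw [mem_ker_iff]
    obtain ⟨-, -, h3⟩ := of_eq (x := (⟨bmk 1 1 b, ⟨1, Q₁.one_mem, 1, Q₂.one_mem, b, rfl⟩⟩ :
      P0 Q₁ Q₂)) rfl
    rw [h3]⟩
  left_inv x := by
    apply Subtype.ext
    apply Subtype.ext
    exact ((mem_ker_iff x.1).1 x.2).symm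
  right_inv b :=
    (of_eq (x := (⟨bmk 1 1 b, ⟨1, Q₁.one_mem, 1, Q₂.one_mem, b, rfl⟩⟩ : P0 Q₁ Q₂)) rfl).2.2

lemma card_ker :
    Nat.card (φ0 (Q₁ := Q₁) (Q₂ := Q₂)).ker = Fintype.card F ^ (n * n) := by
  rw [Nat.card_congr kerEquiv]
  have : Nat.card (Matrix (Fin n) (Fin n) F) = Nat.card (Fin n → Fin n → F) := rfl
  rw [this, Nat.card_fun, Nat.card_fun, Nat.card_eq_fintype_card, Nat.card_eq_fintype_card,
    Fintype.card_fin, ← pow_mul]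

lemma card_P0 :
    Nat.card (P0 Q₁ Q₂) = Nat.card Q₁ * Nat.card Q₂ * Fintype.card F ^ (n * n) := by
  rw [Subgroup.card_eq_card_quotient_mul_card_subgroup (φ0 (Q₁ := Q₁) (Q₂ := Q₂)).ker,
    Nat.card_congr (QuotientGroup.quotientKerEquivOfSurjective _ φ0_surjective).toEquiv,
    card_ker, Nat.card_prod]

section Counting

variable (p : ℕ) [Fact p.Prime]

lemma card_GL_eq (m : ℕ) :
    Nat.card (GL (Fin m) F) =
      (∏ i ∈ Finset.range m, (Fintype.card F ^ (m - i) - 1)) *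
        Fintype.card F ^ (∑ i ∈ Finset.range m, i) := by
  rw [Matrix.card_GL_field, ← Finset.prod_range fun i => Fintype.card F ^ m - Fintype.card F ^ i,
    ← Finset.prod_pow_eq_pow_sum, ← Finset.prod_mul_distrib]
  refine Finset.prod_congr rfl fun i hi => ?_
  rw [Finset.mem_range] at hi
  rw [tsub_mul, one_mul, ← pow_add, Nat.sub_add_cancel hi.le]

lemma p_dvd_q (r : ℕ) (hr : Fintype.card F = p ^ r) : p ∣ Fintype.card F := by
  rcases Nat.eq_zero_or_pos r with rfl | hrpos
  · exfalso
    rw [pow_zero] at hr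
    exact (Fintype.one_lt_card (α := F)).ne' hr
  · exact hr ▸ dvd_pow_self p hrpos.ne'

lemma not_dvd_T (r : ℕ) (hr : Fintype.card F = p ^ r) (m : ℕ) :
    ¬ p ∣ ∏ i ∈ Finset.range m, (Fintype.card F ^ (m - i) - 1) := by
  intro h
  obtain ⟨i, hi, hdvd⟩ := ((Fact.out : p.Prime).prime.dvd_finset_prod_iff _).1 h
  rw [Finset.mem_range] at hi
  have h1 : p ∣ Fintype.card F ^ (m - i) :=
    dvd_pow (p_dvd_q p r hr) (Nat.sub_ne_zero_of_lt hi)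
  have h2 : p ∣ 1 := by
    have hq1 : 1 ≤ Fintype.card F ^ (m - i) := Nat.one_le_pow _ _ Fintype.card_pos
    have := Nat.dvd_sub h1 hdvd
    rwa [Nat.sub_sub_self hq1] at this
  have hle := Nat.le_of_dvd one_pos h2
  have hlt := (Fact.out : p.Prime).one_lt
  omega

lemma T_ne_zero (m : ℕ) :
    (∏ i ∈ Finset.range m, (Fintype.card F ^ (m - i) - 1)) ≠ 0 := by
  rw [Finset.prod_ne_zero_iff]
  intro i hi
  rw [Finset.mem_range] at hi
  have : 1 < Fintype.card F ^ (m - i) :=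
    Nat.one_lt_pow (Nat.sub_ne_zero_of_lt hi) Fintype.one_lt_card
  omega

lemma card_GL_fact (r : ℕ) (hr : Fintype.card F = p ^ r) (m : ℕ) :
    (Nat.card (GL (Fin m) F)).factorization p = r * ∑ i ∈ Finset.range m, i := by
  rw [card_GL_eq, Nat.factorization_mul (T_ne_zero m) (by positivity), Finsupp.add_apply,
    Nat.factorization_eq_zero_of_not_dvd (not_dvd_T p r hr m), zero_add, hr, ← pow_mul,
    (Fact.out : p.Prime).factorization_pow, Finsupp.single_eq_same]

lemma sum_double (m : ℕ) :
    ∑ i ∈ Finset.range (2 * m), i = m * m + 2 * ∑ i ∈ Finset.range m, i := by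
  induction m with
  | zero => simp
  | succ j ih =>
    have h2 : 2 * (j + 1) = (2 * j) + 1 + 1 := by ring
    rw [h2, Finset.sum_range_succ, Finset.sum_range_succ, ih, Finset.sum_range_succ]
    ring

lemma card_P0_sylow (r : ℕ) (hr : Fintype.card F = p ^ r)
    (Q₁ Q₂ : Sylow p (GL (Fin n) F)) :
    Nat.card (P0 (Q₁ : Subgroup (GL (Fin n) F)) Q₂) =
      p ^ ((Nat.card (GL (Fin n ⊕ Fin n) F)).factorization p) := by
  have hG' : Nat.card (GL (Fin n ⊕ Fin n) F) = Nat.card (GL (Fin (n + n)) F) :=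
    Nat.card_congr
      (Units.mapEquiv (Matrix.reindexAlgEquiv F F finSumFinEquiv).toRingEquiv.toMulEquiv).toEquiv
  rw [card_P0, Sylow.card_eq_multiplicity Q₁, Sylow.card_eq_multiplicity Q₂,
    card_GL_fact p r hr n, hG', card_GL_fact p r hr (n + n), hr, ← pow_mul, ← pow_add, ← pow_add]
  congr 1
  have h2 : n + n = 2 * n := by ring
  rw [h2, sum_double]
  ring

end Counting

def Good (p : ℕ) (F : Type) [Field F] [Fintype F] (n : ℕ) {X : Type} [Group X]
    (T : Subgroup X) : Prop :=
  ∃ A : Subgroup T,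
    A.Normal ∧
    (∀ a ∈ A, ∀ b ∈ A, a * b = b * a) ∧
    (∀ a ∈ A, a ^ p = 1) ∧
    Nat.card A = Fintype.card F ^ (n * n) ∧
    ∃ Q₁ Q₂ : Sylow p (GL (Fin n) F),
      ∃ φ : T →* Q₁ × Q₂, Surjective φ ∧ φ.ker = A

lemma good_P0 (p : ℕ) [Fact p.Prime] [CharP F p] (Q₁ Q₂ : Sylow p (GL (Fin n) F)) :
    Good p F n (P0 (Q₁ : Subgroup (GL (Fin n) F)) Q₂) :=
  ⟨(φ0 (Q₁ := (Q₁ : Subgroup (GL (Fin n) F))) (Q₂ := Q₂)).ker,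
    MonoidHom.normal_ker _,
    fun a ha b hb => ker_comm ha hb,
    fun a ha => ker_pow_p p ha,
    card_ker,
    Q₁, Q₂, φ0, φ0_surjective, rfl⟩

lemma good_transfer (p : ℕ) {X Y : Type} [Group X] [Group Y] (e : X ≃* Y) (T : Subgroup X)
    (h : Good p F n T) : Good p F n (T.map e.toMonoidHom) := by
  obtain ⟨A, hN, hC, hP, hCard, Q₁, Q₂, φ, hs, hk⟩ := h
  let ee : T ≃* T.map e.toMonoidHom := MulEquiv.subgroupMap e T
  refine ⟨A.map ee.toMonoidHom, ?_, ?_, ?_, ?_, Q₁, Q₂, φ.comp ee.symm.toMonoidHom,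
    hs.comp ee.symm.surjective, ?_⟩
  · exact Subgroup.Normal.map hN ee.toMonoidHom ee.surjective
  · rintro a ⟨x, hx, rfl⟩ b ⟨y, hy, rfl⟩
    rw [← _root_.map_mul, ← _root_.map_mul, hC x hx y hy]
  · rintro a ⟨x, hx, rfl⟩
    rw [← _root_.map_pow, hP x hx, _root_.map_one]
  · rw [← hCard]
    exact (Nat.card_congr (Subgroup.equivMapOfInjective A ee.toMonoidHom ee.injective).toEquiv).symm
  · rw [← MonoidHom.comap_ker, hk]
    exact (Subgroup.map_equiv_eq_comap_symm' ee A).symm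

end SylowGLAux

set_option synthInstance.maxHeartbeats 1000000 in
set_option maxHeartbeats 1000000 in
open SylowGLAux Matrix Function in
/-- Let `p` be a prime, `F` a finite field of characteristic `p` with `q`
elements, and `m = 2 ^ k` with `k ≥ 1`. Every Sylow `p`-subgroup `S` of `GL(m, F)` has an
elementary abelian (abelian of exponent `p`) normal subgroup `A` with `|A| = q ^ (m² / 4)`
such that `S / A` is isomorphic to the direct product of two Sylow `p`-subgroups of
`GL(m / 2, F)`.  (The isomorphism `S / A ≃ Q₁ × Q₂` is expressed by a surjective
homomorphism `S →* Q₁ × Q₂` with kernel `A`.) -/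
theorem sylow_GL_structure
    (p : ℕ) (hp : p.Prime)
    (F : Type) [Field F] [Fintype F] [CharP F p]
    (k : ℕ) (hk : 1 ≤ k)
    (S : Sylow p (GL (Fin (2 ^ k)) F)) :
    ∃ A : Subgroup (S : Subgroup (GL (Fin (2 ^ k)) F)),
      A.Normal ∧
      (∀ a ∈ A, ∀ b ∈ A, a * b = b * a) ∧
      (∀ a ∈ A, a ^ p = 1) ∧
      Nat.card A = Fintype.card F ^ (2 ^ k * 2 ^ k / 4) ∧
      ∃ Q₁ Q₂ : Sylow p (GL (Fin (2 ^ (k - 1))) F),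
        ∃ φ : (S : Subgroup (GL (Fin (2 ^ k)) F)) →* Q₁ × Q₂,
          Function.Surjective φ ∧ φ.ker = A := by
  haveI : Fact p.Prime := ⟨hp⟩
  set n : ℕ := 2 ^ (k - 1) with hn
  have hnk : n + n = 2 ^ k := by
    rw [hn, ← two_mul, ← pow_succ']
    congr 1
    omega
  obtain ⟨r, -, hr⟩ := FiniteField.card F p
  -- the model Sylow subgroup in `GL (Fin n ⊕ Fin n) F`
  obtain ⟨Q₁⟩ : Nonempty (Sylow p (GL (Fin n) F)) := Sylow.nonempty
  have e1 : GL (Fin n ⊕ Fin n) F ≃* GL (Fin (2 ^ k)) F :=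
    Units.mapEquiv
      (Matrix.reindexAlgEquiv F F (finSumFinEquiv.trans (finCongr hnk))).toRingEquiv.toMulEquiv
  have hcards : Nat.card ((P0 (Q₁ : Subgroup (GL (Fin n) F)) Q₁).map e1.toMonoidHom) =
      p ^ ((Nat.card (GL (Fin (2 ^ k)) F)).factorization p) := by
    rw [← Nat.card_congr (Subgroup.equivMapOfInjective _ e1.toMonoidHom e1.injective).toEquiv,
      card_P0_sylow p r (by exact_mod_cast hr) Q₁ Q₁, Nat.card_congr e1.toEquiv]
  let S1 : Sylow p (GL (Fin (2 ^ k)) F) := Sylow.ofCard _ hcards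
  obtain ⟨g, hg⟩ := MulAction.exists_smul_eq (GL (Fin (2 ^ k)) F) S1 S
  have hSS : (S : Subgroup (GL (Fin (2 ^ k)) F)) =
      (P0 (Q₁ : Subgroup (GL (Fin n) F)) Q₁).map (e1.trans (MulAut.conj g)).toMonoidHom := by
    rw [← hg, Sylow.coe_subgroup_smul, Subgroup.pointwise_smul_def]
    have hS1 : (S1 : Subgroup (GL (Fin (2 ^ k)) F)) =
        (P0 (Q₁ : Subgroup (GL (Fin n) F)) Q₁).map e1.toMonoidHom := rfl
    rw [hS1]
    refine (Subgroup.map_map _ _ _).trans ?_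
    rfl
  have hgood := good_transfer p (e1.trans (MulAut.conj g)) _ (good_P0 p Q₁ Q₁)
  rw [← hSS] at hgood
  obtain ⟨A, h1, h2, h3, h4, QA, QB, φ, h5, h6⟩ := hgood
  have hexp : n * n = 2 ^ k * 2 ^ k / 4 := by
    rw [← hnk]
    have h4' : (n + n) * (n + n) = 4 * (n * n) := by ring
    rw [h4', Nat.mul_div_cancel_left _ (by norm_num : 0 < 4)]
  exact ⟨A, h1, h2, h3, by rw [h4, hexp], QA, QB, φ, h5, h6⟩
end

section
/- Let V be a vector space of finite dimension n ≥ 1 over a finite field F, and let A be an abelian subgroup of GL(V) acting irreducibly on V, i.e., the only F-subspaces U of V satisfying a(U) ⊆ U for all a ∈ A are 0 and V. Then A is cyclic and |A| ≤ |V| − 1. -/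
/-- Let `V` be a vector space of finite dimension `n ≥ 1` over a finite
field `F` and let `A` be an abelian subgroup of `GL(V)` acting irreducibly on `V`. Then `A`
is cyclic and `|A| ≤ |V| - 1`. -/
theorem abelian_irreducible_is_cyclic
    (F : Type) [Field F] [Fintype F]
    (V : Type) [AddCommGroup V] [Module F V] [FiniteDimensional F V]
    (hn : 1 ≤ Module.finrank F V)
    (A : Subgroup (LinearMap.GeneralLinearGroup F V))
    (hab : ∀ a ∈ A, ∀ b ∈ A, a * b = b * a)
    (hirr : ∀ U : Submodule F V,
      (∀ a ∈ A, U.map ((a : LinearMap.GeneralLinearGroup F V) : V →ₗ[F] V) ≤ U) →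
        U = ⊥ ∨ U = ⊤) :
    IsCyclic A ∧ Nat.card A ≤ Nat.card V - 1 := by
  classical
  haveI hnt : Nontrivial V := Module.finrank_pos_iff.mp (lt_of_lt_of_le Nat.zero_lt_one hn)
  haveI : Finite V := Module.finite_of_finite F
  haveI : Finite (V →ₗ[F] V) := Finite.of_injective _ (DFunLike.coe_injective)
  -- the set of endomorphisms coming from A
  set S : Set (Module.End F V) :=
    (fun a : LinearMap.GeneralLinearGroup F V => (a : V →ₗ[F] V)) '' (A : Set _) with hS
  have hScomm : ∀ x ∈ S, ∀ y ∈ S, x * y = y * x := by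
    rintro x ⟨a, ha, rfl⟩ y ⟨b, hb, rfl⟩
    have := hab a ha b hb
    have h1 : ((a * b : LinearMap.GeneralLinearGroup F V) : V →ₗ[F] V)
        = ((b * a : LinearMap.GeneralLinearGroup F V) : V →ₗ[F] V) := by rw [this]
    simpa [Units.val_mul] using h1
  set E : Subalgebra F (Module.End F V) := Algebra.adjoin F S with hE
  letI : CommRing E := Algebra.adjoinCommRingOfComm F hScomm
  haveI : Finite E := Subtype.finite
  -- every element of E commutes with elements of S
  have hcomm : ∀ e : Module.End F V, e ∈ E → ∀ s ∈ S, s * e = e * s := by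
    intro e he s hs
    have hle : E ≤ Subalgebra.centralizer F S := by
      apply Algebra.adjoin_le
      intro x hx
      exact (Subalgebra.mem_centralizer_iff F).mpr fun g hg => hScomm g hg x hx
    exact (Subalgebra.mem_centralizer_iff F).mp (hle he) s hs
  -- nonzero elements of E are injective endomorphisms
  have hinj : ∀ e : Module.End F V, e ∈ E → e ≠ 0 → Function.Injective e := by
    intro e he hne
    have hinv : ∀ a ∈ A, (LinearMap.ker e).map
        ((a : LinearMap.GeneralLinearGroup F V) : V →ₗ[F] V) ≤ LinearMap.ker e := by
      intro a ha
      rintro x ⟨y, hy, rfl⟩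
      have hc := hcomm e he _ ⟨a, ha, rfl⟩
      have hkey : e ((a : V →ₗ[F] V) y) = (a : V →ₗ[F] V) (e y) := by
        have := congrArg (fun f : Module.End F V => f y) hc.symm
        simpa [Module.End.mul_apply] using this
      simp only [LinearMap.mem_ker] at hy ⊢
      rw [hkey, hy, map_zero]
    have hker : LinearMap.ker e = ⊥ := by
      rcases hirr (LinearMap.ker e) hinv with h | h
      · exact h
      · exact absurd (LinearMap.ker_eq_top.mp h) hne
    exact LinearMap.ker_eq_bot.mp hker
  -- E is a field
  have h10 : (1 : Module.End F V) ≠ 0 := by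
    obtain ⟨v, hv⟩ := exists_ne (0 : V)
    intro h
    apply hv
    have := congrArg (fun f : Module.End F V => f v) h
    simpa using this
  have hfield : IsField E := by
    refine ⟨⟨0, 1, ?_⟩, mul_comm, ?_⟩
    · intro h
      exact h10 (congrArg Subtype.val h).symm
    · intro e he
      have hne : (e : Module.End F V) ≠ 0 := by
        intro h
        exact he (Subtype.ext h)
      have hinjE : Function.Injective (fun y : E => e * y) := by
        intro x y hxy
        apply Subtype.ext
        apply LinearMap.ext
        intro v
        have hxy' : (e : Module.End F V) * (x : Module.End F V)
            = (e : Module.End F V) * (y : Module.End F V) := congrArg Subtype.val hxy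
        have := congrArg (fun f : Module.End F V => f v) hxy'
        exact hinj _ e.2 hne (by simpa [Module.End.mul_apply] using this)
      obtain ⟨y, hy⟩ := (Finite.injective_iff_surjective.mp hinjE) 1
      exact ⟨y, hy⟩
  letI : Field E := hfield.toField
  -- A maps injectively into E
  have memA : ∀ a : A, ((a : LinearMap.GeneralLinearGroup F V) : V →ₗ[F] V) ∈ E :=
    fun a => Algebra.subset_adjoin ⟨a, a.2, rfl⟩
  let f : A →* E :=
    { toFun := fun a => ⟨((a : LinearMap.GeneralLinearGroup F V) : V →ₗ[F] V), memA a⟩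
      map_one' := by apply Subtype.ext; simp
      map_mul' := by intro a b; apply Subtype.ext; simp [Units.val_mul] }
  have hf : Function.Injective f := by
    intro a b hab'
    have : ((a : LinearMap.GeneralLinearGroup F V) : V →ₗ[F] V)
        = ((b : LinearMap.GeneralLinearGroup F V) : V →ₗ[F] V) := congrArg Subtype.val hab'
    exact Subtype.ext (Units.ext this)
  haveI : Finite (LinearMap.GeneralLinearGroup F V) :=
    Finite.of_injective (fun u => (u : V →ₗ[F] V)) (fun _ _ h => Units.ext h)
  haveI : Finite A := Subtype.finite
  have hcyc : IsCyclic A := isCyclic_of_subgroup_isDomain f hf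
  -- the cardinality bound
  have hfne : ∀ a : A, f a ≠ 0 := by
    intro a h
    have h0 : ((a : LinearMap.GeneralLinearGroup F V) : V →ₗ[F] V) = 0 :=
      congrArg Subtype.val h
    have h1 := (a : LinearMap.GeneralLinearGroup F V).mul_inv
    rw [h0, zero_mul] at h1
    exact h10 h1.symm
  let g : A → Eˣ := fun a => Units.mk0 (f a) (hfne a)
  have hg : Function.Injective g := by
    intro a b h
    exact hf (by simpa [g, Units.ext_iff] using h)
  -- E embeds into V
  obtain ⟨v₀, hv₀⟩ := exists_ne (0 : V)
  have hEV : Nat.card E ≤ Nat.card V := by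
    apply Nat.card_le_card_of_injective (fun e : E => (e : Module.End F V) v₀)
    intro x y hxy
    by_contra hne
    have hsub : ((x - y : E) : Module.End F V) ≠ 0 := by
      intro h
      apply hne
      apply Subtype.ext
      have : ((x : Module.End F V) - (y : Module.End F V)) = 0 := by
        simpa using h
      exact sub_eq_zero.mp this
    have hi := hinj _ (x - y : E).2 hsub
    apply hv₀
    apply hi
    have : ((x - y : E) : Module.End F V) v₀ = 0 := by
      have hval : ((x - y : E) : Module.End F V)
          = (x : Module.End F V) - (y : Module.End F V) := rfl
      rw [hval]
      simp [LinearMap.sub_apply, hxy]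
    simpa using this
  have hcard : Nat.card A ≤ Nat.card E - 1 := by
    have h1 := Nat.card_le_card_of_injective g hg
    rwa [Nat.card_units] at h1
  exact ⟨hcyc, le_trans hcard (Nat.sub_le_sub_right hEV 1)⟩
end

section
/- There exists an absolute constant c₃ > 0 such that for every integer n ≥ 3 there exists a prime P with the following two properties: the product of all primes p′ ≤ P is greater than n⁴, and the sum of all primes p′ ≤ P is at most c₃ · (log₂ n)² / log₂ log₂ n. -/
open Finset

lemma aux_centralBinom_le (m : ℕ) (hm : 0 < m) :
    Nat.centralBinom m ≤ (2 * m) ^ Nat.sqrt (2 * m) * primorial (2 * m) := by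
  have m2_pos : 0 < 2 * m := by positivity
  set S := (Finset.range (2 * m + 1)).filter Nat.Prime with hS
  set f : ℕ → ℕ := fun x => x ^ (Nat.centralBinom m).factorization x with hf
  have hfS : ∏ x ∈ S, f x = ∏ x ∈ Finset.range (2 * m + 1), f x := by
    refine Finset.prod_filter_of_ne fun p _ h => ?_
    contrapose! h; dsimp only [f]
    rw [Nat.factorization_eq_zero_of_not_prime _ h, pow_zero]
  rw [← Nat.prod_pow_factorization_centralBinom m, ← hfS,
    ← Finset.prod_filter_mul_prod_filter_not S (· ≤ Nat.sqrt (2 * m))]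
  apply Nat.mul_le_mul
  · refine (Finset.prod_le_prod' fun p _ => (?_ : f p ≤ 2 * m)).trans ?_
    · exact Nat.pow_factorization_choose_le m2_pos
    have hcard : (Finset.Icc 1 (Nat.sqrt (2 * m))).card = Nat.sqrt (2 * m) := by
      rw [Nat.card_Icc, Nat.add_sub_cancel]
    rw [Finset.prod_const]
    refine pow_right_mono₀ m2_pos ((Finset.card_le_card fun x hx => ?_).trans hcard.le)
    obtain ⟨h1, h2⟩ := Finset.mem_filter.1 hx
    exact Finset.mem_Icc.mpr ⟨(Finset.mem_filter.1 h1).2.one_lt.le, h2⟩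
  · refine (Finset.prod_le_prod' fun p hp => (?_ : f p ≤ p)).trans ?_
    · obtain ⟨h1, h2⟩ := Finset.mem_filter.1 hp
      refine (pow_right_mono₀ (Finset.mem_filter.1 h1).2.one_lt.le
        (Nat.factorization_choose_le_one (Nat.sqrt_lt'.mp <| not_le.1 h2))).trans (pow_one p).le
    refine Finset.prod_le_prod_of_subset_of_one_le' (Finset.filter_subset _ _) ?_
    exact fun p hp _ => (Finset.mem_filter.1 hp).2.one_lt.le

lemma aux_cheb (m : ℕ) (hm : 4 ≤ m) :
    4 ^ m < m * ((2 * m) ^ Nat.sqrt (2 * m) * primorial (2 * m)) :=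
  (Nat.four_pow_lt_mul_centralBinom m hm).trans_le
    (Nat.mul_le_mul_left m (aux_centralBinom_le m (by omega)))

lemma aux_count (X : ℕ) :
    (Nat.sqrt X + 1) ^
      ((range (X + 1)).filter (fun p => Nat.Prime p ∧ Nat.sqrt X < p)).card ≤ 4 ^ X := by
  set T := (range (X + 1)).filter (fun p => Nat.Prime p ∧ Nat.sqrt X < p) with hT
  have h1 : (Nat.sqrt X + 1) ^ T.card ≤ ∏ p ∈ T, p := by
    rw [← Finset.prod_const]
    exact Finset.prod_le_prod' fun p hp => (Finset.mem_filter.1 hp).2.2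
  have h2 : ∏ p ∈ T, p ≤ primorial X := by
    refine Finset.prod_le_prod_of_subset_of_one_le'
      (Finset.monotone_filter_right _ (fun p _ hp => hp.1) : T ⊆ _) ?_
    exact fun p hp _ => (Finset.mem_filter.1 hp).2.one_lt.le
  exact (h1.trans h2).trans (primorial_le_4_pow X)

lemma aux_sum (X : ℕ) :
    ∑ p ∈ (range (X + 1)).filter Nat.Prime, p ≤
      2 * X + X * ((range (X + 1)).filter (fun p => Nat.Prime p ∧ Nat.sqrt X < p)).card := by
  set S := (range (X + 1)).filter Nat.Prime with hS
  rw [← Finset.sum_filter_add_sum_filter_not S (fun p => Nat.sqrt X < p)]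
  have hsmall : ∑ p ∈ S.filter (fun p => ¬ Nat.sqrt X < p), p ≤ 2 * X := by
    have hc : (S.filter (fun p => ¬ Nat.sqrt X < p)).card ≤ Nat.sqrt X + 1 := by
      have : S.filter (fun p => ¬ Nat.sqrt X < p) ⊆ range (Nat.sqrt X + 1) := fun p hp =>
        Finset.mem_range.2 (Nat.lt_succ_of_le (not_lt.1 (Finset.mem_filter.1 hp).2))
      simpa using Finset.card_le_card this
    calc ∑ p ∈ S.filter (fun p => ¬ Nat.sqrt X < p), p
        ≤ (S.filter (fun p => ¬ Nat.sqrt X < p)).card * Nat.sqrt X := by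
          rw [← smul_eq_mul]
          exact Finset.sum_le_card_nsmul _ _ _ fun p hp => not_lt.1 (Finset.mem_filter.1 hp).2
      _ ≤ (Nat.sqrt X + 1) * Nat.sqrt X := Nat.mul_le_mul_right _ hc
      _ = Nat.sqrt X * Nat.sqrt X + Nat.sqrt X := by ring
      _ ≤ X + X := Nat.add_le_add (Nat.sqrt_le X) (Nat.sqrt_le_self X)
      _ = 2 * X := (two_mul X).symm
  have hlarge : ∑ p ∈ S.filter (fun p => Nat.sqrt X < p), p ≤
      X * ((range (X + 1)).filter (fun p => Nat.Prime p ∧ Nat.sqrt X < p)).card := by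
    have heq : S.filter (fun p => Nat.sqrt X < p) =
        (range (X + 1)).filter (fun p => Nat.Prime p ∧ Nat.sqrt X < p) := by
      rw [hS, Finset.filter_filter]
    rw [heq, mul_comm, ← smul_eq_mul]
    refine Finset.sum_le_card_nsmul _ _ _ fun p hp => ?_
    exact Nat.lt_succ_iff.1 (Finset.mem_range.1 (Finset.mem_filter.1 hp).1)
  omega

lemma aux_pow_bound (m : ℕ) (hm : 500000 ≤ m) :
    m * (2 * m) ^ Nat.sqrt (2 * m) ≤ 2 ^ (m + 500000) := by
  have hm0 : (500000 : ℝ) ≤ (m : ℝ) := by exact_mod_cast hm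
  set s := Nat.sqrt (2 * m) with hs
  have key : (m : ℝ) * ((2 * m : ℕ) : ℝ) ^ s ≤ (2 : ℝ) ^ (m + 500000) := by
    set y : ℝ := ((2 * m : ℕ) : ℝ) with hy
    have hyval : y = 2 * (m : ℝ) := by rw [hy]; push_cast; ring
    have hy6 : (1000000 : ℝ) ≤ y := by rw [hyval]; linarith
    have hy0 : (0 : ℝ) < y := by linarith
    have hy1 : (1 : ℝ) ≤ y := by linarith
    have h24 : (24 : ℝ) ≤ y ^ ((1:ℝ)/4) := by
      have h1 : ((331776 : ℝ)) ^ ((1:ℝ)/4) ≤ y ^ ((1:ℝ)/4) :=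
        Real.rpow_le_rpow (by norm_num) (by linarith) (by norm_num)
      have h2 : (331776 : ℝ) ^ ((1:ℝ)/4) = 24 := by
        rw [show (331776 : ℝ) = 24 ^ (4:ℕ) by norm_num, ← Real.rpow_natCast (24:ℝ) 4,
          ← Real.rpow_mul (by norm_num)]
        norm_num
      linarith
    have hq0 : (0:ℝ) < y ^ ((1:ℝ)/4) := Real.rpow_pos_of_pos hy0 _
    have hq340 : (0:ℝ) < y ^ ((3:ℝ)/4) := Real.rpow_pos_of_pos hy0 _
    have hlog : Real.log y ≤ 4 * y ^ ((1:ℝ)/4) := by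
      have h1 : Real.log (y ^ ((1:ℝ)/4)) ≤ y ^ ((1:ℝ)/4) :=
        (Real.log_le_sub_one_of_pos hq0).trans (by linarith)
      rw [Real.log_rpow hy0] at h1
      linarith
    have hlogy0 : (0:ℝ) ≤ Real.log y := Real.log_nonneg hy1
    have hsle : (s : ℝ) ≤ y ^ ((1:ℝ)/2) := by
      rw [← Real.sqrt_eq_rpow, hy, hs]
      exact Real.nat_sqrt_le_real_sqrt
    have h34 : y ^ ((1:ℝ)/2) * y ^ ((1:ℝ)/4) = y ^ ((3:ℝ)/4) := by
      rw [← Real.rpow_add hy0]; norm_num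
    have h14_34 : y ^ ((1:ℝ)/4) ≤ y ^ ((3:ℝ)/4) :=
      Real.rpow_le_rpow_of_exponent_le hy1 (by norm_num)
    have hslog : (s : ℝ) * Real.log y ≤ 4 * y ^ ((3:ℝ)/4) := by
      calc (s : ℝ) * Real.log y ≤ y ^ ((1:ℝ)/2) * (4 * y ^ ((1:ℝ)/4)) :=
            mul_le_mul hsle hlog hlogy0 (Real.rpow_pos_of_pos hy0 _).le
        _ = 4 * y ^ ((3:ℝ)/4) := by rw [← h34]; ring
    have hlogm : Real.log (m : ℝ) ≤ 4 * y ^ ((3:ℝ)/4) := by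
      have h1 : Real.log (m : ℝ) ≤ Real.log y :=
        Real.log_le_log (by linarith) (by rw [hyval]; linarith)
      linarith
    have h4134 : y ^ ((1:ℝ)/4) * y ^ ((3:ℝ)/4) = y := by
      rw [← Real.rpow_add hy0, show (1:ℝ)/4 + 3/4 = 1 by norm_num, Real.rpow_one]
    have hl2 : (0.6931471803 : ℝ) < Real.log 2 := Real.log_two_gt_d9
    have hkey16 : 16 * y ^ ((3:ℝ)/4) ≤ Real.log 2 * y := by
      calc 16 * y ^ ((3:ℝ)/4) ≤ (Real.log 2 * 24) * y ^ ((3:ℝ)/4) := by nlinarith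
        _ ≤ (Real.log 2 * y ^ ((1:ℝ)/4)) * y ^ ((3:ℝ)/4) := by
            have hl2pos : (0:ℝ) < Real.log 2 := by linarith
            exact mul_le_mul_of_nonneg_right
              (mul_le_mul_of_nonneg_left h24 hl2pos.le) hq340.le
        _ = Real.log 2 * y := by rw [mul_assoc, h4134]
    have hmain : Real.log ((m:ℝ) * y ^ s) ≤ Real.log ((2:ℝ) ^ (m + 500000)) := by
      rw [Real.log_mul (by positivity) (by positivity), Real.log_pow, Real.log_pow]
      have h8 : Real.log (m:ℝ) + (s:ℝ) * Real.log y ≤ 8 * y ^ ((3:ℝ)/4) := by linarith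
      have h9 : 8 * y ^ ((3:ℝ)/4) ≤ Real.log 2 * (m:ℝ) := by
        have hy2 : Real.log 2 * y = Real.log 2 * (2 * (m:ℝ)) := by rw [hyval]
        linarith [hkey16, hy2]
      push_cast
      nlinarith [hm0, h8, h9, hl2]
    have hLpos : (0:ℝ) < (m:ℝ) * y ^ s := by positivity
    have h2 := Real.exp_le_exp.2 hmain
    rwa [Real.exp_log hLpos, Real.exp_log (by positivity)] at h2
  exact_mod_cast key

lemma aux_count_real (X : ℕ) (hX : 1 ≤ X) :
    (((range (X + 1)).filter (fun p => Nat.Prime p ∧ Nat.sqrt X < p)).card : ℝ) * Real.log X ≤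
      4 * Real.log 2 * X := by
  set M := ((range (X + 1)).filter (fun p => Nat.Prime p ∧ Nat.sqrt X < p)).card with hM
  have h0 : ((Nat.sqrt X + 1 : ℕ) : ℝ) ^ M ≤ (4 : ℝ) ^ X := by exact_mod_cast aux_count X
  have hXR : (1:ℝ) ≤ (X:ℝ) := by exact_mod_cast hX
  have hb : (0:ℝ) < ((Nat.sqrt X + 1 : ℕ) : ℝ) := by positivity
  have h1 : (M : ℝ) * Real.log ((Nat.sqrt X + 1 : ℕ) : ℝ) ≤ (X : ℝ) * Real.log 4 := by
    have := Real.log_le_log (by positivity) h0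
    rwa [Real.log_pow, Real.log_pow] at this
  have h4 : Real.log 4 = 2 * Real.log 2 := by
    rw [show (4:ℝ) = 2 ^ (2:ℕ) by norm_num, Real.log_pow]; push_cast; ring
  have h2 : Real.log (X : ℝ) ≤ 2 * Real.log ((Nat.sqrt X + 1 : ℕ) : ℝ) := by
    have hsq : Real.sqrt (X : ℝ) ≤ ((Nat.sqrt X + 1 : ℕ) : ℝ) := by
      push_cast
      exact Real.real_sqrt_le_nat_sqrt_succ
    have hsqpos : (0:ℝ) < Real.sqrt (X : ℝ) := Real.sqrt_pos.2 (by linarith)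
    have := Real.log_le_log hsqpos hsq
    rw [Real.log_sqrt (by linarith)] at this
    linarith
  have hM0 : (0:ℝ) ≤ (M:ℝ) := by positivity
  calc (M : ℝ) * Real.log (X:ℝ) ≤ (M : ℝ) * (2 * Real.log ((Nat.sqrt X + 1 : ℕ) : ℝ)) := by
        apply mul_le_mul_of_nonneg_left h2 hM0
    _ = 2 * ((M : ℝ) * Real.log ((Nat.sqrt X + 1 : ℕ) : ℝ)) := by ring
    _ ≤ 2 * ((X : ℝ) * Real.log 4) := by
        have hlogb0 : (0:ℝ) ≤ Real.log ((Nat.sqrt X + 1 : ℕ) : ℝ) :=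
          Real.log_nonneg (by exact_mod_cast Nat.succ_le_succ (Nat.zero_le _))
        linarith
    _ = 4 * Real.log 2 * X := by rw [h4]; ring

/-- There is an absolute constant `c₃ > 0` such that for every integer
`n ≥ 3` there is a prime `P` for which the product of all primes `p' ≤ P` exceeds `n⁴`,
while the sum of all primes `p' ≤ P` is at most `c₃ * (log₂ n)² / log₂ log₂ n`. -/
theorem primes_product_sum_bound :
    ∃ c₃ : ℝ, 0 < c₃ ∧
      ∀ n : ℕ, 3 ≤ n →
        ∃ P : ℕ, P.Prime ∧
          n ^ 4 < ∏ p' ∈ (Finset.range (P + 1)).filter Nat.Prime, p' ∧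
          ((∑ p' ∈ (Finset.range (P + 1)).filter Nat.Prime, p' : ℕ) : ℝ) ≤
            c₃ * (Real.logb 2 n) ^ 2 / Real.logb 2 (Real.logb 2 n) := by
  refine ⟨10 ^ 14, by norm_num, fun n hn => ?_⟩
  obtain ⟨k, hkdef⟩ : ∃ k, k = Nat.log 2 n + 1 := ⟨_, rfl⟩
  obtain ⟨m, hmdef⟩ : ∃ m, m = 4 * k + 500000 := ⟨_, rfl⟩
  obtain ⟨X, hXdef⟩ : ∃ X, X = 2 * m := ⟨_, rfl⟩
  have hkm : 500000 ≤ m := by omega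
  have hX2 : 2 ≤ X := by omega
  have hne : ((Finset.range (X + 1)).filter Nat.Prime).Nonempty :=
    ⟨2, Finset.mem_filter.2 ⟨Finset.mem_range.2 (by omega), Nat.prime_two⟩⟩
  obtain ⟨P, hPdef⟩ : ∃ P, P = ((Finset.range (X + 1)).filter Nat.Prime).max' hne := ⟨_, rfl⟩
  have hPmem : P ∈ (Finset.range (X + 1)).filter Nat.Prime := hPdef ▸ Finset.max'_mem _ hne
  have hPprime : P.Prime := (Finset.mem_filter.1 hPmem).2
  have hPle : P ≤ X := Nat.lt_succ_iff.1 (Finset.mem_range.1 (Finset.mem_filter.1 hPmem).1)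
  have hfilter : (Finset.range (P + 1)).filter Nat.Prime
      = (Finset.range (X + 1)).filter Nat.Prime := by
    ext q
    simp only [Finset.mem_filter, Finset.mem_range, Nat.lt_succ_iff]
    constructor
    · rintro ⟨h1, h2⟩; exact ⟨h1.trans hPle, h2⟩
    · rintro ⟨h1, h2⟩
      refine ⟨?_, h2⟩
      rw [hPdef]
      exact Finset.le_max' _ q
        (Finset.mem_filter.2 ⟨Finset.mem_range.2 (Nat.lt_succ_of_le h1), h2⟩)
  have hn0 : n ≠ 0 := by omega
  have hnk : n < 2 ^ k := by rw [hkdef]; exact Nat.lt_pow_succ_log_self (by norm_num) n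
  refine ⟨P, hPprime, ?_, ?_⟩
  · rw [hfilter]
    have hprim : (∏ p' ∈ (Finset.range (X + 1)).filter Nat.Prime, p') = primorial X := rfl
    rw [hprim, hXdef]
    have hcheb := aux_cheb m (by omega)
    have hpow := aux_pow_bound m hkm
    obtain ⟨s, hsdef⟩ : ∃ s, s = Nat.sqrt (2 * m) := ⟨_, rfl⟩
    rw [← hsdef] at hcheb hpow
    have hB : 0 < m * (2 * m) ^ s := Nat.mul_pos (by omega) (pow_pos (by omega) s)
    have h14 : n ^ 4 < 2 ^ (k * 4) := by
      have h := Nat.pow_lt_pow_left hnk (show 4 ≠ 0 by norm_num)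
      rwa [← pow_mul] at h
    have hchain : n ^ 4 * (m * (2 * m) ^ s) < 4 ^ m := by
      calc n ^ 4 * (m * (2 * m) ^ s) < 2 ^ (k * 4) * (m * (2 * m) ^ s) :=
            mul_lt_mul_of_pos_right h14 hB
        _ ≤ 2 ^ (k * 4) * 2 ^ (m + 500000) := Nat.mul_le_mul_left _ hpow
        _ = 2 ^ (k * 4 + (m + 500000)) := (pow_add 2 _ _).symm
        _ = 4 ^ m := by
            rw [show (4:ℕ) = 2 ^ 2 by norm_num, ← pow_mul]
            congr 1
            omega
    have hfin : n ^ 4 * (m * (2 * m) ^ s) < primorial (2 * m) * (m * (2 * m) ^ s) := by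
      calc n ^ 4 * (m * (2 * m) ^ s) < 4 ^ m := hchain
        _ < m * ((2 * m) ^ s * primorial (2 * m)) := hcheb
        _ = primorial (2 * m) * (m * (2 * m) ^ s) := by ring
    exact Nat.lt_of_mul_lt_mul_right hfin
  · rw [hfilter]
    set Ssum := ∑ p' ∈ (Finset.range (X + 1)).filter Nat.Prime, p' with hSdef
    set M := ((Finset.range (X + 1)).filter (fun p => Nat.Prime p ∧ Nat.sqrt X < p)).card
      with hMdef
    set L := Real.logb 2 n with hLdef
    have h2n : (2:ℝ) < (n:ℝ) := by exact_mod_cast (by omega : 2 < n)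
    have hL1 : 1 < L := by
      rw [hLdef]
      calc (1:ℝ) = Real.logb 2 2 := (Real.logb_self_eq_one (by norm_num)).symm
        _ < Real.logb 2 n := Real.logb_lt_logb (by norm_num) (by norm_num) h2n
    have hL0 : (0:ℝ) < L := by linarith
    have hlogL0 : (0:ℝ) < Real.log L := Real.log_pos hL1
    have hlogbL : (0:ℝ) < Real.logb 2 L := Real.logb_pos (by norm_num) hL1
    have hkL : (k : ℝ) ≤ L + 1 := by
      have h1 : (2:ℕ) ^ Nat.log 2 n ≤ n := Nat.pow_log_le_self 2 hn0
      have h1' : ((2:ℝ)) ^ Nat.log 2 n ≤ (n:ℝ) := by exact_mod_cast h1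
      have h2 : ((Nat.log 2 n : ℕ) : ℝ) ≤ L := by
        rw [hLdef]
        calc ((Nat.log 2 n : ℕ) : ℝ) = Real.logb 2 ((2:ℝ) ^ Nat.log 2 n) := by
              rw [Real.logb_pow, Real.logb_self_eq_one (by norm_num)]
              ring
          _ ≤ Real.logb 2 n :=
              Real.logb_le_logb_of_le (by norm_num) (by positivity) h1'
      rw [hkdef]
      push_cast
      linarith
    have hLk : L < (k : ℝ) := by
      rw [hLdef]
      have hnkR : (n:ℝ) < (2:ℝ) ^ k := by exact_mod_cast hnk
      calc Real.logb 2 n < Real.logb 2 ((2:ℝ) ^ k) :=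
            Real.logb_lt_logb (by norm_num) (by positivity) hnkR
        _ = (k : ℝ) := by
            rw [Real.logb_pow, Real.logb_self_eq_one (by norm_num)]
            ring
    have hXeq : (X:ℝ) = 8 * (k:ℝ) + 1000000 := by
      rw [hXdef, hmdef]; push_cast; ring
    have hXL : (X:ℝ) ≤ 2000000 * L := by
      rw [hXeq]; linarith
    have hX0 : (0:ℝ) < (X:ℝ) := by
      rw [hXeq]; positivity
    have hLX : L ≤ (X:ℝ) := by
      have hk0 : (0:ℝ) ≤ (k:ℝ) := by positivity
      rw [hXeq]; linarith
    have hlogLX : Real.log L ≤ Real.log (X:ℝ) := Real.log_le_log hL0 hLX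
    have hlogXX : Real.log (X:ℝ) ≤ (X:ℝ) := by
      linarith [Real.log_le_sub_one_of_pos hX0]
    have hcount := aux_count_real X (by omega)
    rw [← hMdef] at hcount
    have hsum : (Ssum:ℝ) ≤ 2 * (X:ℝ) + (X:ℝ) * (M:ℝ) := by
      rw [hSdef, hMdef]
      exact_mod_cast aux_sum X
    have hM0 : (0:ℝ) ≤ (M:ℝ) := Nat.cast_nonneg _
    rw [le_div_iff₀ hlogbL, Real.logb, ← mul_div_assoc, div_le_iff₀ (Real.log_pos one_lt_two)]
    have hlog2 : (0.6931471803 : ℝ) < Real.log 2 := Real.log_two_gt_d9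
    have hlog2le : Real.log 2 ≤ 1 := by
      linarith [Real.log_le_sub_one_of_pos (show (0:ℝ) < 2 by norm_num)]
    calc (Ssum:ℝ) * Real.log L
        ≤ (2 * (X:ℝ) + (X:ℝ) * (M:ℝ)) * Real.log L :=
          mul_le_mul_of_nonneg_right hsum hlogL0.le
      _ = 2 * (X:ℝ) * Real.log L + (X:ℝ) * ((M:ℝ) * Real.log L) := by ring
      _ ≤ 2 * (X:ℝ) * (X:ℝ) + (X:ℝ) * (4 * Real.log 2 * (X:ℝ)) := by
          have t1 : Real.log L ≤ (X:ℝ) := hlogLX.trans hlogXX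
          have t2 : (M:ℝ) * Real.log L ≤ 4 * Real.log 2 * (X:ℝ) :=
            (mul_le_mul_of_nonneg_left hlogLX hM0).trans hcount
          have u1 : 2 * (X:ℝ) * Real.log L ≤ 2 * (X:ℝ) * (X:ℝ) := by nlinarith
          have u2 : (X:ℝ) * ((M:ℝ) * Real.log L) ≤ (X:ℝ) * (4 * Real.log 2 * (X:ℝ)) :=
            mul_le_mul_of_nonneg_left t2 hX0.le
          linarith
      _ ≤ 6 * (X:ℝ) ^ 2 := by nlinarith [sq_nonneg (X:ℝ)]
      _ ≤ 6 * (2000000 * L) ^ 2 := by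
          have h := pow_le_pow_left₀ hX0.le hXL 2
          linarith
      _ = 24000000000000 * L ^ 2 := by ring
      _ ≤ 10 ^ 14 * L ^ 2 * Real.log 2 := by nlinarith [sq_nonneg L, hlog2]
end

section
/- Let n ≥ 2 and let 1 ≤ s ≤ n be integers. Let p₁, …, p_r be distinct primes, each greater than 2, with p₁·p₂·⋯·p_r > n⁴. Let D be an r × s matrix with entries in {0, 1} such that for every column index j, the product over i of p_i^(D(i,j)) is at most s. Then there exists a row index i such that the number of j with D(i,j) = 1 is at most s/4. -/
/-- Let `n ≥ 2`, `1 ≤ s ≤ n`, and let `p 0, …, p (r-1)` be distinct primes,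
each greater than `2`, with product exceeding `n⁴`. Let `D` be an `r × s` zero-one matrix
such that for each column `j` the product `∏ i, (p i) ^ (D i j)` is at most `s`. Then some
row `i` contains at most `s / 4` ones. -/
theorem exists_sparse_row
    (n s r : ℕ) (hn : 2 ≤ n) (hs1 : 1 ≤ s) (hsn : s ≤ n)
    (p : Fin r → ℕ)
    (hprime : ∀ i, (p i).Prime)
    (hgt2 : ∀ i, 2 < p i)
    (hdistinct : Function.Injective p)
    (hprod : n ^ 4 < ∏ i, p i)
    (D : Fin r → Fin s → ℕ)
    (hD01 : ∀ i j, D i j = 0 ∨ D i j = 1)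
    (hcol : ∀ j, ∏ i, p i ^ D i j ≤ s) :
    ∃ i : Fin r,
      ((Finset.univ.filter fun j : Fin s => D i j = 1).card : ℝ) ≤ (s : ℝ) / 4 := by
  by_contra hcon
  push_neg at hcon
  set c : Fin r → ℕ := fun i => (Finset.univ.filter fun j : Fin s => D i j = 1).card with hc
  have hci : ∀ i, s + 1 ≤ 4 * c i := by
    intro i
    have h1 : (s : ℝ) / 4 < (c i : ℝ) := hcon i
    have h2 : (s : ℝ) < 4 * (c i : ℝ) := by linarith
    have h3 : s < 4 * c i := by exact_mod_cast h2
    omega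
  have hsum : ∀ i, ∑ j, D i j = c i := by
    intro i
    show ∑ j, D i j = (Finset.univ.filter fun j : Fin s => D i j = 1).card
    rw [Finset.card_filter]
    refine Finset.sum_congr rfl fun j _ => ?_
    rcases hD01 i j with h | h <;> simp [h]
  have hT : ∏ i, p i ^ c i ≤ s ^ s := by
    calc ∏ i, p i ^ c i = ∏ i, p i ^ (∑ j, D i j) :=
          Finset.prod_congr rfl fun i _ => by rw [hsum i]
      _ = ∏ i, ∏ j, p i ^ D i j :=
          Finset.prod_congr rfl fun i _ => by
            rw [Finset.prod_pow_eq_pow_sum]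
      _ = ∏ j, ∏ i, p i ^ D i j := Finset.prod_comm
      _ ≤ ∏ _j : Fin s, s := Finset.prod_le_prod' fun j _ => hcol j
      _ = s ^ s := by simp
  have h4 : (∏ i, p i ^ c i) ^ 4 ≤ s ^ (4 * s) := by
    calc (∏ i, p i ^ c i) ^ 4 ≤ (s ^ s) ^ 4 := Nat.pow_le_pow_left hT 4
      _ = s ^ (4 * s) := by rw [← pow_mul, mul_comm]
  have h5 : (∏ i, p i) ^ (s + 1) ≤ (∏ i, p i ^ c i) ^ 4 := by
    rw [← Finset.prod_pow, ← Finset.prod_pow]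
    refine Finset.prod_le_prod' fun i _ => ?_
    rw [← pow_mul]
    exact Nat.pow_le_pow_right (by have := hgt2 i; omega) (by have := hci i; omega)
  have h6 : (n ^ 4) ^ (s + 1) < (∏ i, p i) ^ (s + 1) :=
    Nat.pow_lt_pow_left hprod (by omega)
  have h7 : s ^ (4 * s) < (n ^ 4) ^ (s + 1) := by
    calc s ^ (4 * s) ≤ n ^ (4 * s) := Nat.pow_le_pow_left hsn _
      _ < n ^ (4 * s + 4) := Nat.pow_lt_pow_right (by omega) (by omega)
      _ = (n ^ 4) ^ (s + 1) := by ring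
  linarith
end

section
/- Let p be a prime, q = p^f a power of p, and W a finite-dimensional vector space over F_q. Let P be a subgroup of the group of F_q-linear automorphisms of W that acts irreducibly on W over F_q and primitively over F_q, and let Z be the group of scalar multiplications by elements of F_q^* (so Z ≅ F_q^*, centralized by P). Regard W as a vector space over the prime field F_p and regard the elements of P and Z as F_p-linear automorphisms of W. Then the group G generated by P and Z acts irreducibly on W over F_p and primitively over F_p. Here a subgroup G of K-linear automorphisms of a K-vector space W acts primitively over K if it acts irreducibly over K and there is no decomposition W = W₁ ⊕ ⋯ ⊕ W_t into t ≥ 2 nonzero K-subspaces such that every element of G permutes the set {W₁, …, W_t}. -/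
/-- A subgroup `G` of `K`-linear automorphisms of a `K`-vector space `W` acts irreducibly
over `K` if the only `K`-subspaces `U` of `W` with `g (U) ⊆ U` for all `g ∈ G` are `0` and
`W`. -/
def ActsIrreducibly (K W : Type*) [Field K] [AddCommGroup W] [Module K W]
    (G : Subgroup (W ≃ₗ[K] W)) : Prop :=
  ∀ U : Submodule K W, (∀ g ∈ G, U.map (g : W →ₗ[K] W) ≤ U) → U = ⊥ ∨ U = ⊤

/-- A subgroup `G` of `K`-linear automorphisms of `W` preserves a nontrivial decomposition
if `W = W₁ ⊕ ⋯ ⊕ W_t` for some `t ≥ 2` nonzero `K`-subspaces that are permuted by every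
element of `G`. -/
def PreservesDecomposition (K W : Type*) [Field K] [AddCommGroup W] [Module K W]
    (G : Subgroup (W ≃ₗ[K] W)) : Prop :=
  ∃ (t : ℕ) (Wi : Fin t → Submodule K W),
    2 ≤ t ∧ (∀ i, Wi i ≠ ⊥) ∧ DirectSum.IsInternal Wi ∧
      ∀ g ∈ G, ∀ i, ∃ j, (Wi i).map (g : W →ₗ[K] W) = Wi j

/-- A subgroup `G` of `K`-linear automorphisms of `W` acts primitively over `K` if it acts
irreducibly over `K` and preserves no nontrivial decomposition of `W`. -/
def ActsPrimitively (K W : Type*) [Field K] [AddCommGroup W] [Module K W]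
    (G : Subgroup (W ≃ₗ[K] W)) : Prop :=
  ActsIrreducibly K W G ∧ ¬ PreservesDecomposition K W G

section AuxLattice

/-- Grouping lemma: sups of an independent family over disjoint finsets are disjoint. -/
lemma aux_disjoint_biSup {α : Type*} {ι : Type*} [CompleteLattice α] [IsModularLattice α]
    {f : ι → α} (hf : iSupIndep f) : ∀ (A B : Finset ι), Disjoint A B →
    Disjoint (⨆ i ∈ A, f i) (⨆ i ∈ B, f i) := by
  classical
  intro A
  induction A using Finset.induction_on with
  | empty => intro B _; simp
  | @insert a A ha ih =>
    intro B hAB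
    have haB : a ∉ B := fun h => (Finset.disjoint_left.mp hAB (Finset.mem_insert_self a A)) h
    have hAB' : Disjoint A B := hAB.mono_left (Finset.subset_insert a A)
    rw [Finset.iSup_insert]
    have h2 : Disjoint (f a) ((⨆ i ∈ A, f i) ⊔ ⨆ i ∈ B, f i) := by
      have h3 := hf.disjoint_biSup (x := a) (y := ↑(A ∪ B)) (by simp [ha, haB])
      refine h3.mono_right (sup_le ?_ ?_) <;> refine biSup_mono ?_ <;>
        intro i hi <;> simp [hi]
    exact (ih B hAB').disjoint_sup_left_of_disjoint_sup_right h2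

end AuxLattice

section AuxScalar

variable {K F W : Type*} [Field K] [Field F] [AddCommGroup W] [Module F W]
  [Module K W] [SMulCommClass K F W]

/-- Scalar multiplication by a unit of `F` as a `K`-linear automorphism. -/
def scEquiv (c : Fˣ) : W ≃ₗ[K] W where
  toFun x := (c : F) • x
  map_add' x y := smul_add _ x y
  map_smul' a x := (smul_comm a ((c : F)) x).symm
  invFun x := ((c⁻¹ : Fˣ) : F) • x
  left_inv x := by simp [smul_smul]
  right_inv x := by simp [smul_smul]

@[simp] lemma scEquiv_apply (c : Fˣ) (x : W) : (scEquiv (K := K) c) x = (c : F) • x := rfl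

@[simp] lemma scEquiv_coe_apply (c : Fˣ) (x : W) :
    ((scEquiv (K := K) c : W ≃ₗ[K] W) : W →ₗ[K] W) x = (c : F) • x := rfl

lemma scEquiv_map_map (c c' : Fˣ) (N : Submodule K W) :
    (N.map ((scEquiv (K := K) (W := W) c) : W →ₗ[K] W)).map
      ((scEquiv (K := K) (W := W) c') : W →ₗ[K] W)
      = N.map ((scEquiv (K := K) (W := W) (c' * c)) : W →ₗ[K] W) := by
  rw [← Submodule.map_comp]
  congr 1
  ext x
  simp [mul_smul]

lemma scEquiv_map_one (N : Submodule K W) :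
    N.map ((scEquiv (K := K) (W := W) (1 : Fˣ)) : W →ₗ[K] W) = N := by
  convert Submodule.map_id N
  ext x
  simp

/-- Promote an `F`-stable `K`-submodule to an `F`-submodule. -/
def promote (N : Submodule K W) (h : ∀ (c : F) (x : W), x ∈ N → c • x ∈ N) :
    Submodule F W where
  carrier := N
  add_mem' := N.add_mem
  zero_mem' := N.zero_mem
  smul_mem' c x hx := h c x hx

@[simp] lemma mem_promote {N : Submodule K W} {h : ∀ (c : F) (x : W), x ∈ N → c • x ∈ N} {x : W} :
    x ∈ promote N h ↔ x ∈ N := Iff.rfl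

end AuxScalar

lemma aux_arith (r t : ℕ) (hr : 2 ≤ r) (ht : 2 ≤ t) : t * (r - 1) + 1 < r ^ t := by
  obtain ⟨s, rfl⟩ : ∃ s, r = s + 2 := ⟨r - 2, by omega⟩
  clear hr
  induction t, ht using Nat.le_induction with
  | base =>
    have h : (s + 2) ^ 2 = s * s + 4 * s + 4 := by ring
    have hsub : s + 2 - 1 = s + 1 := rfl
    rw [h, hsub]
    nlinarith
  | succ t ht ih =>
    have hpow : (s + 2) ^ (t + 1) = (s + 2) ^ t * (s + 2) := pow_succ _ _
    have hsub : s + 2 - 1 = s + 1 := rfl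
    rw [hsub] at ih ⊢
    rw [hpow]
    have hX : (t * (s + 1) + 2) * (s + 2) ≤ (s + 2) ^ t * (s + 2) :=
      Nat.mul_le_mul_right _ (by omega)
    have hY : (t + 1) * (s + 1) + 1 < (t * (s + 1) + 2) * (s + 2) := by
      have h1 : t * (s + 1) ≤ t * (s + 1) * (s + 2) := Nat.le_mul_of_pos_right _ (by omega)
      nlinarith [h1]
    linarith


set_option maxHeartbeats 2000000 in
set_option synthInstance.maxHeartbeats 800000 in
/-- **Liebeck–Shalev claim.** Let `F` be a finite field of characteristic `p`
(so `|F| = q = p^f`) and `W` a finite-dimensional `F`-vector space, also regarded as a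
vector space over the prime field `ZMod p`. Let `P` be a subgroup of the `F`-linear
automorphisms of `W` acting irreducibly and primitively over `F`. Let `G` be the subgroup
of `ZMod p`-linear automorphisms of `W` generated by (the scalar restrictions of) the
elements of `P` together with the scalar multiplications by nonzero elements of `F`
(a cyclic group `Z ≅ Fˣ` centralised by `P`). Then `G` acts irreducibly and primitively
on `W` over the prime field `ZMod p`. -/
theorem primitive_over_prime_field
    (p : ℕ) [Fact p.Prime]
    (F : Type) [Field F] [Fintype F] [CharP F p] [Algebra (ZMod p) F]
    (W : Type) [AddCommGroup W] [Module F W] [Module (ZMod p) W]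
    [IsScalarTower (ZMod p) F W] [FiniteDimensional F W]
    (P : Subgroup (W ≃ₗ[F] W))
    (hP : ActsPrimitively F W P)
    (G : Subgroup (W ≃ₗ[ZMod p] W))
    (hG : G = Subgroup.closure
      ({e : W ≃ₗ[ZMod p] W | ∃ g ∈ P, ∀ x : W, e x = g x} ∪
       {e : W ≃ₗ[ZMod p] W | ∃ c : F, c ≠ 0 ∧ ∀ x : W, e x = c • x})) :
    ActsPrimitively (ZMod p) W G := by
  classical
  have hscG : ∀ c : Fˣ, (scEquiv (K := ZMod p) (F := F) (W := W) c) ∈ G := by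
    intro c
    rw [hG]
    exact Subgroup.subset_closure (Or.inr ⟨(c : F), c.ne_zero, fun x => rfl⟩)
  have hresG : ∀ g ∈ P, (g.restrictScalars (ZMod p)) ∈ G := by
    intro g hg
    rw [hG]
    exact Subgroup.subset_closure (Or.inl ⟨g, hg, fun x => rfl⟩)
  have hsmul_stable : ∀ (U : Submodule (ZMod p) W),
      (∀ g ∈ G, U.map (g : W →ₗ[ZMod p] W) ≤ U) →
      ∀ (c : F) (x : W), x ∈ U → c • x ∈ U := by
    intro U hU c x hx
    rcases eq_or_ne c 0 with rfl | hc
    · simpa using U.zero_mem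
    · exact hU _ (hscG (Units.mk0 c hc)) (Submodule.mem_map_of_mem hx)
  have hirr : ActsIrreducibly (ZMod p) W G := by
    intro U hU
    set U' : Submodule F W := promote U (hsmul_stable U hU) with hU'def
    have hPinv : ∀ g ∈ P, U'.map (g : W →ₗ[F] W) ≤ U' := by
      intro g hg y hy
      obtain ⟨x, hx, rfl⟩ := hy
      exact hU _ (hresG g hg) (Submodule.mem_map_of_mem hx)
    rcases hP.1 U' hPinv with h | h
    · left
      rw [Submodule.eq_bot_iff] at h ⊢
      exact fun x hx => h x hx
    · right
      rw [Submodule.eq_top_iff'] at h ⊢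
      exact fun x => h x
  refine ⟨hirr, ?_⟩
  rintro ⟨t, Wi, ht2, hbot, hint, hperm⟩
  have hInd : iSupIndep Wi := hint.submodule_iSupIndep
  have hTop : ⨆ i, Wi i = ⊤ := hint.submodule_iSup_eq_top
  have hWiInj : Function.Injective Wi := hInd.injective hbot
  -- the relation "in the same Fˣ-orbit"
  set Rel : Fin t → Fin t → Prop := fun i j =>
    ∃ c : Fˣ, (Wi i).map ((scEquiv (K := ZMod p) (F := F) (W := W) c) : W →ₗ[ZMod p] W) = Wi j
    with hRel
  have hrefl : ∀ i, Rel i i := fun i => ⟨1, scEquiv_map_one (Wi i)⟩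
  have hsymm : ∀ {i j}, Rel i j → Rel j i := by
    rintro i j ⟨c, hc⟩
    refine ⟨c⁻¹, ?_⟩
    rw [← hc, scEquiv_map_map, inv_mul_cancel, scEquiv_map_one]
  have htrans : ∀ {i j k}, Rel i j → Rel j k → Rel i k := by
    rintro i j k ⟨c, hc⟩ ⟨c', hc'⟩
    exact ⟨c' * c, by rw [← scEquiv_map_map, hc, hc']⟩
  by_cases hall : ∀ i j, Rel i j
  · -- Case B : the scalars act transitively on the blocks; derive a contradiction by counting
    haveI : Finite W := Module.finite_of_finite F
    haveI : Fintype W := Fintype.ofFinite W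
    haveI : ∀ i : Fin t, Fintype ↥(Wi i) := fun i => Fintype.ofFinite _
    set i0 : Fin t := ⟨0, by omega⟩ with hi0
    have hpair : ∀ i j : Fin t, i ≠ j → Disjoint (Wi i) (Wi j) :=
      fun i j h => hInd.pairwiseDisjoint h
    -- a unit mapping Wi i0 into itself maps it onto itself
    have hstabEq : ∀ u : Fˣ, (∀ x ∈ Wi i0, (u : F) • x ∈ Wi i0) →
        (Wi i0).map ((scEquiv (K := ZMod p) (F := F) (W := W) u) : W →ₗ[ZMod p] W) = Wi i0 := by
      intro u hu
      obtain ⟨j, hj⟩ := hperm _ (hscG u) i0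
      have hle : Wi j ≤ Wi i0 := by
        rw [← hj]; rintro y ⟨x, hx, rfl⟩; exact hu x hx
      by_cases hji : j = i0
      · rw [hj, hji]
      · exact absurd ((hpair j i0 hji).eq_bot_of_le hle) (hbot j)
    -- the stabilizer subfield
    have hSinv : ∀ c : F, (∀ x ∈ Wi i0, c • x ∈ Wi i0) →
        ∀ x ∈ Wi i0, c⁻¹ • x ∈ Wi i0 := by
      intro c hc
      rcases eq_or_ne c 0 with rfl | h0
      · simpa using hc
      · intro x hx
        have hEq := hstabEq (Units.mk0 c h0) hc
        rw [← hEq] at hx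
        obtain ⟨y, hy, rfl⟩ := hx
        simpa [smul_smul, inv_mul_cancel₀ h0] using hy
    set F1 : Subfield F :=
      { carrier := {c : F | ∀ x ∈ Wi i0, c • x ∈ Wi i0}
        zero_mem' := fun x hx => by simpa using (Wi i0).zero_mem
        one_mem' := fun x hx => by simpa using hx
        add_mem' := fun {a b} ha hb x hx => by
          rw [add_smul]; exact (Wi i0).add_mem (ha x hx) (hb x hx)
        mul_mem' := fun {a b} ha hb x hx => by rw [mul_smul]; exact ha _ (hb x hx)
        neg_mem' := fun {a} ha x hx => by rw [neg_smul]; exact (Wi i0).neg_mem (ha x hx)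
        inv_mem' := fun a ha => hSinv a ha } with hF1
    haveI : Fintype F1 := Fintype.ofFinite _
    set W1' : Submodule F1 W :=
      { carrier := Wi i0
        add_mem' := (Wi i0).add_mem
        zero_mem' := (Wi i0).zero_mem
        smul_mem' := fun c {x} hx => c.2 x hx } with hW1'
    haveI : Fintype ↥W1' := Fintype.ofFinite _
    haveI : Module.Finite F1 ↥W1' := Module.Finite.of_finite
    set r := Fintype.card F1 with hr
    set m := Module.finrank F1 ↥W1' with hm
    set q := Fintype.card F with hq
    have hcardW1 : Fintype.card ↥W1' = r ^ m := Module.card_eq_pow_finrank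
    have hr2 : 2 ≤ r := Fintype.one_lt_card
    have hm1 : 1 ≤ m := by
      have hnt : Nontrivial ↥W1' := by
        obtain ⟨x, hx, hx0⟩ := (Submodule.ne_bot_iff _).mp (hbot i0)
        exact ⟨⟨x, hx⟩, 0, fun h => hx0 (congrArg Subtype.val h)⟩
      have h1 : 1 < Fintype.card ↥W1' := Fintype.one_lt_card
      rcases Nat.eq_zero_or_pos m with h | h
      · rw [h, pow_zero] at hcardW1; omega
      · exact h
    -- the scalar action on blocks, and a section
    have hph' : ∀ c : Fˣ, ∃ j, (Wi i0).map
        ((scEquiv (K := ZMod p) (F := F) (W := W) c) : W →ₗ[ZMod p] W) = Wi j :=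
      fun c => hperm _ (hscG c) i0
    choose φ hφ using hph'
    have hφsurj : Function.Surjective φ := by
      intro j
      obtain ⟨c, hc⟩ := hall i0 j
      exact ⟨c, hWiInj ((hφ c).symm.trans hc)⟩
    choose sec hsec using hφsurj
    -- the counting of Fˣ
    have hmem : ∀ c : Fˣ, (((sec (φ c))⁻¹ * c : Fˣ) : F) ∈ F1 := by
      intro c
      intro x hx
      have h1 : ((c : F) • x) ∈ (Wi i0).map
          ((scEquiv (K := ZMod p) (F := F) (W := W) (sec (φ c))) : W →ₗ[ZMod p] W) := by
        rw [hφ (sec (φ c)), hsec (φ c), ← hφ c]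
        exact Submodule.mem_map_of_mem hx
      obtain ⟨y, hy, hyx⟩ := h1
      have : (((sec (φ c))⁻¹ * c : Fˣ) : F) • x = y := by
        have hyx' : ((sec (φ c) : Fˣ) : F) • y = (c : F) • x := hyx
        calc (((sec (φ c))⁻¹ * c : Fˣ) : F) • x
            = ((sec (φ c) : Fˣ) : F)⁻¹ • ((c : F) • x) := by
              rw [smul_smul]; congr 1; simp
          _ = ((sec (φ c) : Fˣ) : F)⁻¹ • (((sec (φ c) : Fˣ) : F) • y) := by rw [hyx']
          _ = y := by
              rw [smul_smul, inv_mul_cancel₀ (Units.ne_zero _), one_smul]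
      rw [this]
      exact hy
    set Ψ : Fˣ → Fin t × {y : ↥F1 // y ≠ 0} := fun c =>
      (φ c, ⟨⟨(((sec (φ c))⁻¹ * c : Fˣ) : F), hmem c⟩,
        fun h => Units.ne_zero ((sec (φ c))⁻¹ * c) (congrArg Subtype.val h)⟩) with hΨ
    have hΨinj : Function.Injective Ψ := by
      intro a b h
      have h1 : φ a = φ b := congrArg Prod.fst h
      have h2 : (((sec (φ a))⁻¹ * a : Fˣ) : F) = (((sec (φ b))⁻¹ * b : Fˣ) : F) :=
        congrArg (fun z => ((z.2 : ↥F1) : F)) h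
      rw [h1] at h2
      have h3 : (sec (φ b))⁻¹ * a = (sec (φ b))⁻¹ * b := Units.ext h2
      exact mul_left_cancel h3
    have hcount : q - 1 ≤ t * (r - 1) := by
      have h1 : Fintype.card Fˣ ≤ Fintype.card (Fin t × {y : ↥F1 // y ≠ 0}) :=
        Fintype.card_le_of_injective Ψ hΨinj
      have h2 : Fintype.card {y : ↥F1 // y ≠ 0} = r - 1 := by
        have h3 := Fintype.card_subtype_compl (fun y : ↥F1 => y = 0)
        rw [hr]; simp [Fintype.card_subtype_eq]
      rw [Fintype.card_prod, Fintype.card_fin, h2, Fintype.card_units] at h1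
      exact h1
    -- the spanning bound
    haveI : Module.Free F1 ↥W1' := Module.Free.of_divisionRing _ _
    set b := Module.finBasis F1 ↥W1' with hb
    have hspan : Submodule.span F (Set.range (fun k => ((b k : ↥W1') : W))) = ⊤ := by
      rw [eq_top_iff]
      intro x _
      have hx : x ∈ ⨆ i, Wi i := by rw [hTop]; trivial
      refine Submodule.iSup_induction _
        (motive := fun y => y ∈ Submodule.span F (Set.range (fun k => ((b k : ↥W1') : W)))) hx
        ?_ (Submodule.zero_mem _) (fun a b' ha hb' => Submodule.add_mem _ ha hb')
      intro i y hy
      have hWieq : Wi i = (Wi i0).map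
          ((scEquiv (K := ZMod p) (F := F) (W := W) (sec i)) : W →ₗ[ZMod p] W) := by
        rw [hφ (sec i), hsec i]
      rw [hWieq] at hy
      obtain ⟨z, hz, rfl⟩ := hy
      have hz' : z ∈ Submodule.span F (Set.range (fun k => ((b k : ↥W1') : W))) := by
        have hrepr : ((∑ k, b.repr ⟨z, hz⟩ k • b k : ↥W1') : W) = z := by rw [b.sum_repr]
        rw [← hrepr]
        rw [Submodule.coe_sum]
        refine Submodule.sum_mem _ fun k _ => ?_
        have hsm : ((b.repr ⟨z, hz⟩ k • b k : ↥W1') : W)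
            = ((b.repr ⟨z, hz⟩ k : F1) : F) • ((b k : ↥W1') : W) := rfl
        rw [hsm]
        exact Submodule.smul_mem _ _ (Submodule.subset_span ⟨k, rfl⟩)
      have := Submodule.smul_mem _ ((sec i : Fˣ) : F) hz'
      simpa using this
    have hcardW_le : Fintype.card W ≤ q ^ m := by
      have hsurj : Function.Surjective
          (fun a : Fin m → F => ∑ k, a k • ((b k : ↥W1') : W)) := by
        intro x
        have hx : x ∈ Submodule.span F (Set.range (fun k => ((b k : ↥W1') : W))) := by
          rw [hspan]; trivial
        obtain ⟨a, ha⟩ := (Submodule.mem_span_range_iff_exists_fun F).mp hx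
        exact ⟨a, ha⟩
      have h1 := Fintype.card_le_of_surjective _ hsurj
      calc Fintype.card W ≤ Fintype.card (Fin m → F) := h1
        _ = q ^ m := by rw [Fintype.card_fun, Fintype.card_fin]
    -- the product formula
    have hcardprod : Fintype.card W = (r ^ m) ^ t := by
      have e0 : (DirectSum (Fin t) fun i => ↥(Wi i)) ≃ W := Equiv.ofBijective _ hint
      have e1 : W ≃ ∀ i, ↥(Wi i) := e0.symm.trans (DFinsupp.equivFunOnFintype)
      have hcards : ∀ i, Fintype.card ↥(Wi i) = r ^ m := by
        intro i
        have hWieq : (Wi i0).map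
            ((scEquiv (K := ZMod p) (F := F) (W := W) (sec i)) : W →ₗ[ZMod p] W) = Wi i := by
          rw [hφ (sec i), hsec i]
        have e2 : ↥(Wi i0) ≃ ↥(Wi i) :=
          ((scEquiv (K := ZMod p) (F := F) (W := W)
            (sec i)).submoduleMap (Wi i0)).toEquiv.trans
            (Equiv.cast (congrArg (fun (N : Submodule (ZMod p) W) => ↥N) hWieq))
        have e3 : ↥W1' ≃ ↥(Wi i0) := Equiv.subtypeEquivRight (fun x => Iff.rfl)
        rw [← Fintype.card_congr e2, ← Fintype.card_congr e3, hcardW1]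
      rw [Fintype.card_congr e1, Fintype.card_pi]
      rw [Finset.prod_congr rfl (fun i _ => hcards i)]
      rw [Finset.prod_const, Finset.card_univ, Fintype.card_fin]
    -- put it together
    have hkey : r ^ t ≤ q := by
      have h1 : (r ^ t) ^ m ≤ q ^ m := by
        calc (r ^ t) ^ m = (r ^ m) ^ t := by rw [← pow_mul, ← pow_mul, mul_comm]
          _ = Fintype.card W := hcardprod.symm
          _ ≤ q ^ m := hcardW_le
      exact (Nat.pow_le_pow_iff_left (by omega)).mp h1
    have harith := aux_arith r t hr2 ht2
    have hq1 : 1 ≤ q := Fintype.card_pos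
    set A := t * (r - 1) with hA
    set B := r ^ t with hB
    omega
  · -- Case A : at least two scalar-orbits of blocks; contradict primitivity of P over F
    push_neg at hall
    obtain ⟨i₁, j₁, hnr⟩ := hall
    set sd : Setoid (Fin t) := ⟨Rel, ⟨hrefl, @hsymm, @htrans⟩⟩ with hsd
    letI : DecidableEq (Quotient sd) := Classical.decEq _
    haveI : Finite (Quotient sd) := Quotient.finite _
    haveI : Fintype (Quotient sd) := Fintype.ofFinite _
    set cls : Quotient sd → Finset (Fin t) :=
      fun q => Finset.univ.filter (fun i => Quotient.mk sd i = q) with hcls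
    set N : Quotient sd → Submodule (ZMod p) W := fun q => ⨆ i ∈ cls q, Wi i with hN
    have hclsq : ∀ i q, i ∈ cls q ↔ Quotient.mk sd i = q := fun i q => by simp [hcls]
    have hmemcls : ∀ i, i ∈ cls (Quotient.mk sd i) := fun i => (hclsq i _).mpr rfl
    have hWile : ∀ (i) (q) (_ : i ∈ cls q), Wi i ≤ N q := fun i q h => le_biSup _ h
    have hstab : ∀ (q) (c : F) (x : W), x ∈ N q → c • x ∈ N q := by
      intro q c x hx
      rcases eq_or_ne c 0 with rfl | hc
      · simpa using (N q).zero_mem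
      · set u := Units.mk0 c hc with hu
        have hmap : (N q).map
            ((scEquiv (K := ZMod p) (F := F) (W := W) u) : W →ₗ[ZMod p] W) ≤ N q := by
          rw [hN]
          simp only [Submodule.map_iSup]
          refine iSup₂_le fun i hi => ?_
          obtain ⟨j, hj⟩ := hperm _ (hscG u) i
          rw [hj]
          refine hWile j q ?_
          rw [hclsq]
          rw [← (hclsq i q).mp hi]
          exact (Quotient.sound (hsymm ⟨u, hj⟩))
        have := hmap (Submodule.mem_map_of_mem hx)
        simpa [hu] using this
    set V : Quotient sd → Submodule F W := fun q => promote (N q) (hstab q) with hV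
    have hVbot : ∀ q, V q ≠ ⊥ := by
      intro q hq
      obtain ⟨i, rfl⟩ := Quotient.exists_rep q
      obtain ⟨x, hx, hx0⟩ := (Submodule.ne_bot_iff _).mp (hbot i)
      exact hx0 ((Submodule.eq_bot_iff _).mp hq x (hWile i _ (hmemcls i) hx))
    have hVtop : ⨆ q, V q = ⊤ := by
      rw [eq_top_iff]
      intro x _
      have hx : x ∈ ⨆ i, Wi i := by rw [hTop]; trivial
      refine Submodule.iSup_induction _ (motive := fun y => y ∈ ⨆ q, V q) hx ?_ ?_ ?_
      · intro i y hy
        exact (le_iSup V (Quotient.mk sd i)) (hWile i _ (hmemcls i) hy)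
      · exact Submodule.zero_mem _
      · exact fun a b ha hb => Submodule.add_mem _ ha hb
    have hVind : iSupIndep V := by
      intro q
      rw [Submodule.disjoint_def]
      intro x hxV hxS
      have hxS' : x ∈ ⨆ (q') (_ : q' ≠ q), N q' := by
        rw [iSup_subtype'] at hxS ⊢
        refine Submodule.iSup_induction _
          (motive := fun y => y ∈ ⨆ (k : {q' // q' ≠ q}), N k.1) hxS ?_ ?_ ?_
        · intro k y hy
          exact (le_iSup (fun k : {q' // q' ≠ q} => N k.1) k) hy
        · exact Submodule.zero_mem _
        · exact fun a b ha hb => Submodule.add_mem _ ha hb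
      have hdisj : Disjoint (N q) (⨆ (q') (_ : q' ≠ q), N q') := by
        set B : Finset (Fin t) := Finset.univ.filter (fun i => Quotient.mk sd i ≠ q) with hB
        have h1 : (⨆ (q') (_ : q' ≠ q), N q') ≤ ⨆ i ∈ B, Wi i := by
          refine iSup₂_le fun q' hq' => ?_
          refine iSup₂_le fun i hi => ?_
          refine le_biSup _ ?_
          rw [hB]
          refine Finset.mem_filter.mpr ⟨Finset.mem_univ i, ?_⟩
          rw [(hclsq i q').mp hi]
          exact hq'
        have h2 : Disjoint (cls q) B := by
          rw [Finset.disjoint_left]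
          intro i hi hiB
          rw [hclsq] at hi
          rw [hB] at hiB
          exact (Finset.mem_filter.mp hiB).2 hi
        exact (aux_disjoint_biSup hInd (cls q) B h2).mono_right h1
      exact Submodule.disjoint_def.mp hdisj x hxV hxS'
    have hVperm : ∀ g ∈ P, ∀ q, ∃ q', (V q).map (g : W →ₗ[F] W) = V q' := by
      intro g hg q
      obtain ⟨i0, rfl⟩ := Quotient.exists_rep q
      set e := g.restrictScalars (ZMod p) with he
      have heG : e ∈ G := hresG g hg
      have hs' : ∀ i, ∃ j, (Wi i).map (e : W →ₗ[ZMod p] W) = Wi j := hperm e heG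
      choose σ hσ using hs'
      have hcomm : ∀ (c : Fˣ) (Nn : Submodule (ZMod p) W),
          (Nn.map ((scEquiv (K := ZMod p) (F := F) (W := W) c) : W →ₗ[ZMod p] W)).map
            (e : W →ₗ[ZMod p] W)
          = (Nn.map (e : W →ₗ[ZMod p] W)).map
            ((scEquiv (K := ZMod p) (F := F) (W := W) c) : W →ₗ[ZMod p] W) := by
        intro c Nn
        rw [← Submodule.map_comp, ← Submodule.map_comp]
        congr 1
        ext x
        simp [he]
      have hrelσ : ∀ i j, Rel i j → Rel (σ i) (σ j) := by
        rintro i j ⟨c, hc⟩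
        exact ⟨c, by rw [← hσ i, ← hcomm, hc, hσ j]⟩
      refine ⟨Quotient.mk sd (σ i0), ?_⟩
      have hmain : (N (Quotient.mk sd i0)).map (e : W →ₗ[ZMod p] W)
          = N (Quotient.mk sd (σ i0)) := by
        apply le_antisymm
        · conv_lhs => rw [hN]
          simp only [Submodule.map_iSup]
          refine iSup₂_le fun i hi => ?_
          rw [hσ i]
          refine hWile (σ i) _ ?_
          rw [hclsq]
          exact Quotient.sound (hrelσ _ _ (Quotient.exact ((hclsq i _).mp hi)))
        · conv_lhs => rw [hN]
          refine iSup₂_le fun j hj => ?_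
          have hjr : Rel (σ i0) j := hsymm (Quotient.exact ((hclsq j _).mp hj))
          obtain ⟨c, hc⟩ := hjr
          obtain ⟨i', hi'⟩ := hperm _ (hscG c) i0
          have hji' : Wi j = (Wi i').map (e : W →ₗ[ZMod p] W) := by
            rw [← hi', hcomm, hσ i0, hc]
          rw [hji']
          exact Submodule.map_mono
            (hWile i' _ ((hclsq i' _).mpr (Quotient.sound (hsymm ⟨c, hi'⟩))))
      ext x
      rw [mem_promote, ← hmain]
      simp only [Submodule.mem_map]
      constructor
      · rintro ⟨y, hy, rfl⟩; exact ⟨y, hy, rfl⟩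
      · rintro ⟨y, hy, rfl⟩; exact ⟨y, hy, rfl⟩
    haveI hnontriv : Nontrivial (Quotient sd) :=
      ⟨Quotient.mk sd i₁, Quotient.mk sd j₁, fun h => hnr (Quotient.exact h)⟩
    set n := Fintype.card (Quotient sd) with hn
    have hn2 : 2 ≤ n := Fintype.one_lt_card
    set eqv : Fin n ≃ Quotient sd := (Fintype.equivFin (Quotient sd)).symm with heqv
    refine hP.2 ⟨n, V ∘ eqv, hn2, fun k => hVbot _, ?_, ?_⟩
    · rw [DirectSum.isInternal_submodule_iff_iSupIndep_and_iSup_eq_top]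
      refine ⟨hVind.comp eqv.injective, ?_⟩
      rw [Function.comp_def, eqv.iSup_comp]
      exact hVtop
    · intro g hg k
      obtain ⟨q2, hq2⟩ := hVperm g hg (eqv k)
      refine ⟨eqv.symm q2, ?_⟩
      rw [Function.comp_apply, Function.comp_apply, Equiv.apply_symm_apply]
      exact hq2
end
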